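/- arXiv:2205.09718 — 9 statements merged into one kernel-verified Lean document; each statement's English description precedes it below -/
import Mathlib

section
/- If X is a metric space, A ⊆ X is a nonempty closed subset, and X \ A (with the restricted metric) is a discrete space, then for any two distinct persistence diagrams σ, τ in D_∞(X,A) the bottleneck distance satisfies d_∞(σ,τ) > 0. -/
open scoped ENNReal
open Filter Metric Set

/-- The bottleneck (pre)distance between two `ℕ`-indexed representatives of persistence
diagrams on the metric pair `(X, A)`: the infimum, over countable multisets `α`, `β` of points
of `A` adjoined to `f` and `g` respectively and over bijections between the resulting
multisets, of the supremum displacement. -/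
noncomputable def bdist {X : Type*} [MetricSpace X] (A : Set X) (f g : ℕ → X) : ℝ≥0∞ :=
  ⨅ (α : ℕ → X) (_ : ∀ n, α n ∈ A) (β : ℕ → X) (_ : ∀ n, β n ∈ A)
    (e : (ℕ ⊕ ℕ) ≃ (ℕ ⊕ ℕ)), ⨆ n : ℕ ⊕ ℕ, edist (Sum.elim f α n) (Sum.elim g β (e n))

/-- Two representatives define the same persistence diagram on `(X, A)` iff their restrictions
away from `A` agree as multisets, i.e. there is a value-preserving bijection between the index
sets of points outside `A`. -/
def DiagEquiv {X : Type*} [MetricSpace X] (A : Set X) (f g : ℕ → X) : Prop :=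
  ∃ e : {n : ℕ // f n ∉ A} ≃ {n : ℕ // g n ∉ A}, ∀ p, g (e p).1 = f p.1

/-- A representative belongs to `D_∞(X, A)` iff it is at finite bottleneck distance from the
empty diagram (represented by any multiset of points of `A`). -/
def IsDiagram {X : Type*} [MetricSpace X] (A : Set X) (f : ℕ → X) : Prop :=
  ∃ g : ℕ → X, (∀ n, g n ∈ A) ∧ bdist A f g ≠ ⊤

/-- The quotient metric of `X/A`, read on representatives in `X`:
`d_{X/A}(x,y) = min (d(x,y)) (d(x,A) + d(y,A))`. -/
noncomputable def qdist {X : Type*} [MetricSpace X] (A : Set X) (x y : X) : ℝ :=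
  min (dist x y) (Metric.infDist x A + Metric.infDist y A)

lemma fiber_equiv_aux {X : Type*} [MetricSpace X] (A : Set X) (hA : A.Nonempty)
    (hAcl : IsClosed A) (hdisc : DiscreteTopology (Aᶜ : Set X)) (f g : ℕ → X)
    (h0 : bdist A f g = 0) (v : X) (hv : v ∉ A) :
    Nonempty ({n : ℕ // f n = v} ≃ {m : ℕ // g m = v}) := by
  -- isolation radius
  have hvo : IsOpen ({(⟨v, hv⟩ : (Aᶜ : Set X))} : Set (Aᶜ : Set X)) := isOpen_discrete _
  rw [Metric.isOpen_iff] at hvo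
  obtain ⟨r, hrpos, hr⟩ := hvo ⟨v, hv⟩ rfl
  have hiso : ∀ y : X, y ∉ A → dist y v < r → y = v := by
    intro y hy hdy
    have hmem : (⟨y, hy⟩ : (Aᶜ : Set X)) ∈ Metric.ball (⟨v, hv⟩ : (Aᶜ : Set X)) r := by
      simp [Metric.mem_ball, Subtype.dist_eq, hdy]
    simpa [Subtype.ext_iff] using hr hmem
  have hid : 0 < infDist v A := (hAcl.notMem_iff_infDist_pos hA).1 hv
  set ε := min r (infDist v A) with hε
  have hεpos : 0 < ε := lt_min hrpos hid
  have hlt : bdist A f g < ENNReal.ofReal ε := by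
    rw [h0]; exact ENNReal.ofReal_pos.mpr hεpos
  rw [bdist] at hlt
  simp only [iInf_lt_iff] at hlt
  obtain ⟨α, hα, β, hβ, e, he⟩ := hlt
  have key : ∀ n, dist (Sum.elim f α n) (Sum.elim g β (e n)) < ε := fun n =>
    edist_lt_ofReal.mp ((le_iSup _ n).trans_lt he)
  have key' : ∀ n, dist (Sum.elim f α (e.symm n)) (Sum.elim g β n) < ε := by
    intro n
    have := key (e.symm n)
    rwa [e.apply_symm_apply] at this
  have hfg : ∀ n : ℕ, f n = v → ∃ m : ℕ, e (Sum.inl n) = Sum.inl m ∧ g m = v := by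
    intro n hn
    rcases h : e (Sum.inl n) with m | k
    · have hk := key (Sum.inl n)
      rw [h] at hk
      simp only [Sum.elim_inl, hn] at hk
      have hgm : g m ∉ A := by
        intro hmem
        exact absurd ((infDist_le_dist_of_mem hmem (x := v)).trans_lt hk)
          (not_lt.mpr (min_le_right _ _))
      refine ⟨m, rfl, hiso (g m) hgm ?_⟩
      rw [dist_comm]
      exact hk.trans_le (min_le_left _ _)
    · have hk := key (Sum.inl n)
      rw [h] at hk
      simp only [Sum.elim_inl, Sum.elim_inr, hn] at hk
      exact absurd ((infDist_le_dist_of_mem (hβ k) (x := v)).trans_lt hk)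
        (not_lt.mpr (min_le_right _ _))
  have hgf : ∀ m : ℕ, g m = v → ∃ n : ℕ, e.symm (Sum.inl m) = Sum.inl n ∧ f n = v := by
    intro m hm
    rcases h : e.symm (Sum.inl m) with n | k
    · have hk := key' (Sum.inl m)
      rw [h] at hk
      simp only [Sum.elim_inl, hm] at hk
      have hfn : f n ∉ A := by
        intro hmem
        exact absurd ((infDist_le_dist_of_mem hmem (x := v)).trans_lt
          (dist_comm (f n) v ▸ hk)) (not_lt.mpr (min_le_right _ _))
      exact ⟨n, rfl, hiso (f n) hfn (hk.trans_le (min_le_left _ _))⟩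
    · have hk := key' (Sum.inl m)
      rw [h] at hk
      simp only [Sum.elim_inl, Sum.elim_inr, hm] at hk
      exact absurd ((infDist_le_dist_of_mem (hα k) (x := v)).trans_lt
        (dist_comm (α k) v ▸ hk)) (not_lt.mpr (min_le_right _ _))
  choose φ hφ1 hφ2 using hfg
  choose ψ hψ1 hψ2 using hgf
  exact ⟨{
    toFun := fun p => ⟨φ p.1 p.2, hφ2 p.1 p.2⟩
    invFun := fun q => ⟨ψ q.1 q.2, hψ2 q.1 q.2⟩
    left_inv := by
      rintro ⟨n, hn⟩
      ext
      have h1 := hφ1 n hn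
      have h2 := hψ1 (φ n hn) (hφ2 n hn)
      rw [← h1, Equiv.symm_apply_apply] at h2
      exact (Sum.inl.inj h2).symm
    right_inv := by
      rintro ⟨m, hm⟩
      ext
      have h1 := hψ1 m hm
      have h2 := hφ1 (ψ m hm) (hψ2 m hm)
      rw [← h1, Equiv.apply_symm_apply] at h2
      exact (Sum.inl.inj h2).symm }⟩

private theorem stmt_0' {X : Type*} [MetricSpace X] (A : Set X) (hA : A.Nonempty)
    (hAcl : IsClosed A) (hdisc : DiscreteTopology (Aᶜ : Set X))
    (f g : ℕ → X)
    (hne : ¬ (∃ e : {n : ℕ // f n ∉ A} ≃ {n : ℕ // g n ∉ A}, ∀ p, g (e p).1 = f p.1)) :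
    0 < bdist A f g := by
  by_contra h
  have h0 : bdist A f g = 0 := le_antisymm (not_lt.mp h) zero_le
  apply hne
  set F : {n : ℕ // f n ∉ A} → (Aᶜ : Set X) := fun p => ⟨f p.1, p.2⟩ with hF
  set G : {m : ℕ // g m ∉ A} → (Aᶜ : Set X) := fun q => ⟨g q.1, q.2⟩ with hG
  have E : ∀ c : (Aᶜ : Set X), {p // F p = c} ≃ {q // G q = c} := by
    intro c
    have eF : {p : {n : ℕ // f n ∉ A} // F p = c} ≃ {n : ℕ // f n = c.1} :=
      { toFun := fun p => ⟨p.1.1, congrArg Subtype.val p.2⟩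
        invFun := fun n => ⟨⟨n.1, by rw [n.2]; exact c.2⟩, Subtype.ext n.2⟩
        left_inv := fun p => by ext; rfl
        right_inv := fun n => by ext; rfl }
    have eG : {q : {m : ℕ // g m ∉ A} // G q = c} ≃ {m : ℕ // g m = c.1} :=
      { toFun := fun q => ⟨q.1.1, congrArg Subtype.val q.2⟩
        invFun := fun m => ⟨⟨m.1, by rw [m.2]; exact c.2⟩, Subtype.ext m.2⟩
        left_inv := fun q => by ext; rfl
        right_inv := fun m => by ext; rfl }
    exact eF.trans ((fiber_equiv_aux A hA hAcl hdisc f g h0 c.1 c.2).some.trans eG.symm)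
  refine ⟨Equiv.ofFiberEquiv E, fun p => ?_⟩
  have := Equiv.ofFiberEquiv_map E p
  exact congrArg Subtype.val this


/-- If `X \ A` is discrete, then distinct persistence diagrams in `D_∞(X,A)` are at
positive bottleneck distance. -/
theorem stmt_0 {X : Type*} [MetricSpace X] (A : Set X) (hA : A.Nonempty)
    (hAcl : IsClosed A) (hdisc : DiscreteTopology (Aᶜ : Set X))
    (f g : ℕ → X) (hf : IsDiagram A f) (hg : IsDiagram A g)
    (hne : ¬ DiagEquiv A f g) : 0 < bdist A f g := by
  exact stmt_0' A hA hAcl hdisc f g hne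
end

section
/- If X is a metric space and A ⊆ X is a nonempty closed subset such that X \ A (with the restricted metric) is not discrete, then there exist persistence diagrams σ ≠ τ in D_∞(X,A) with d_∞(σ,τ) = 0; hence D_∞(X,A) is not a metric space. -/
open scoped ENNReal
open Filter Metric Set
open Topology

set_option linter.unreachableTactic false
set_option linter.unusedTactic false

def cyc (N : ℕ) : ℕ ≃ ℕ where
  toFun n := if n < N then n+1 else if n = N then 0 else n
  invFun m := if m = 0 then N else if m ≤ N then m-1 else m
  left_inv n := by dsimp only; split_ifs <;> first | omega | exact absurd ‹False› not_false
  right_inv m := by dsimp only; split_ifs <;> first | omega | exact absurd ‹False› not_false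

lemma bdist_le {X : Type*} [MetricSpace X] (A : Set X) (f g : ℕ → X)
    (α : ℕ → X) (hα : ∀ n, α n ∈ A) (β : ℕ → X) (hβ : ∀ n, β n ∈ A)
    (e : (ℕ ⊕ ℕ) ≃ (ℕ ⊕ ℕ)) :
    bdist A f g ≤ ⨆ n : ℕ ⊕ ℕ, edist (Sum.elim f α n) (Sum.elim g β (e n)) :=
  iInf_le_of_le α (iInf_le_of_le hα (iInf_le_of_le β (iInf_le_of_le hβ (iInf_le _ e))))

/-- If `X \ A` is not discrete, then there are distinct persistence diagrams in `D_∞(X,A)`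
at bottleneck distance zero; hence `D_∞(X,A)` is not a metric space. -/
theorem stmt_1 {X : Type*} [MetricSpace X] (A : Set X) (hA : A.Nonempty)
    (hAcl : IsClosed A) (hndisc : ¬ DiscreteTopology (Aᶜ : Set X)) :
    ∃ f g : ℕ → X, IsDiagram A f ∧ IsDiagram A g ∧ ¬ DiagEquiv A f g ∧
      bdist A f g = 0 := by
  obtain ⟨a, ha⟩ := hA
  -- find an accumulation point x of Aᶜ
  have hacc : ∃ x : (Aᶜ : Set X), (𝓝[≠] x).NeBot := by
    by_contra h
    push_neg at h
    exact hndisc (discreteTopology_iff_nhds_ne.mpr fun x => h x)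
  obtain ⟨x, hx⟩ := hacc
  -- a sequence in Aᶜ converging to x, avoiding x
  have hseq : ∀ n : ℕ, ∃ y : (Aᶜ : Set X), y ≠ x ∧ dist (y : X) (x : X) < 1 / (n + 1) := by
    intro n
    have hpos : (0 : ℝ) < 1 / (n + 1) := by positivity
    have hball : Metric.ball x (1 / (n + 1)) ∈ 𝓝[≠] x :=
      nhdsWithin_le_nhds (Metric.ball_mem_nhds x hpos)
    have hne : ({x}ᶜ : Set (Aᶜ : Set X)) ∈ 𝓝[≠] x := self_mem_nhdsWithin
    obtain ⟨y, hy1, hy2⟩ := Filter.nonempty_of_mem (Filter.inter_mem hball hne)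
    exact ⟨y, hy2, by simpa [Subtype.dist_eq] using hy1⟩
  choose u hu hud using hseq
  have hxA : (x : X) ∉ A := x.2
  have huA : ∀ n, ((u n : X)) ∉ A := fun n => (u n).2
  have hune : ∀ n, ((u n : X)) ≠ (x : X) := fun n => fun h => hu n (Subtype.coe_injective h)
  set f : ℕ → X := fun n => (u n : X) with hf
  set g : ℕ → X := fun n => Nat.casesOn n (x : X) (fun k => (u k : X)) with hg
  have hg0 : g 0 = (x : X) := rfl
  have hgs : ∀ k, g (k + 1) = (u k : X) := fun k => rfl
  -- a uniform bound used for IsDiagram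
  have hbd1 : ∀ n, dist (u n : X) (x : X) ≤ 1 := fun n =>
    (hud n).le.trans (by
      rw [div_le_one (by positivity)]
      have : (0:ℝ) ≤ n := Nat.cast_nonneg n
      linarith)
  have hdiag : ∀ h : ℕ → X, (∀ n, dist (h n) (x : X) ≤ 1) → IsDiagram A h := by
    intro h hh
    refine ⟨fun _ => a, fun _ => ha, ?_⟩
    have hle : bdist A h (fun _ => a) ≤ ENNReal.ofReal 1 + edist (x : X) a := by
      refine le_trans (bdist_le A h _ (fun _ => a) (fun _ => ha) (fun _ => a) (fun _ => ha)
        (Equiv.refl _)) (iSup_le ?_)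
      rintro (n | n)
      · simp only [Equiv.refl_apply, Sum.elim_inl]
        calc edist (h n) a ≤ edist (h n) (x : X) + edist (x : X) a := edist_triangle _ _ _
          _ ≤ ENNReal.ofReal 1 + edist (x : X) a := by
              gcongr
              rw [edist_dist]
              exact ENNReal.ofReal_le_ofReal (hh n)
      · simp
    exact ne_top_of_le_ne_top (ENNReal.add_ne_top.mpr ⟨ENNReal.ofReal_ne_top, edist_ne_top _ _⟩) hle
  refine ⟨f, g, hdiag f hbd1, hdiag g ?_, ?_, ?_⟩
  · intro n
    cases n with
    | zero => simp [hg0]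
    | succ k => rw [hgs k]; exact hbd1 k
  · -- not DiagEquiv
    rintro ⟨e, he⟩
    obtain ⟨p, hp⟩ := e.surjective ⟨0, hxA⟩
    have := he p
    rw [hp] at this
    exact hune p.1 this.symm
  · -- bdist = 0
    refine le_antisymm ?_ zero_le
    have key : ∀ N : ℕ, bdist A f g ≤ ENNReal.ofReal (2 / (N + 1)) := by
      intro N
      refine le_trans (bdist_le A f g (fun _ => a) (fun _ => ha) (fun _ => a) (fun _ => ha)
        (Equiv.sumCongr (cyc N) (Equiv.refl ℕ))) (iSup_le ?_)
      rintro (n | n)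
      · simp only [Equiv.sumCongr_apply, Sum.map_inl, Sum.elim_inl]
        show edist (f n) (g (cyc N n)) ≤ _
        have hcyc : cyc N n = if n < N then n+1 else if n = N then 0 else n := rfl
        by_cases h1 : n < N
        · rw [hcyc, if_pos h1, hgs]
          simp [hf]
        · by_cases h2 : n = N
          · rw [hcyc, if_neg h1, if_pos h2, hg0, edist_dist]
            refine ENNReal.ofReal_le_ofReal ?_
            refine (hud n).le.trans ?_
            subst h2
            rw [div_le_div_iff₀ (by positivity) (by positivity)]
            have : (0:ℝ) ≤ n := Nat.cast_nonneg n
            linarith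
          · have hn : N + 1 ≤ n := by omega
            obtain ⟨m, rfl⟩ : ∃ m, n = m + 1 := ⟨n - 1, by omega⟩
            rw [hcyc, if_neg h1, if_neg h2, hgs, edist_dist]
            refine ENNReal.ofReal_le_ofReal ?_
            have h3 : dist (f (m+1)) (u m : X) ≤ dist (u (m+1) : X) (x:X) + dist (u m : X) (x:X) := by
              simpa [hf, dist_comm] using dist_triangle (u (m+1) : X) (x : X) (u m : X)
            refine h3.trans ?_
            have hb1 : dist (u (m+1) : X) (x:X) ≤ 1 / (N + 1 : ℝ) := by
              refine (hud (m+1)).le.trans ?_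
              rw [div_le_div_iff₀ (by positivity) (by positivity)]
              have : (N : ℝ) + 1 ≤ (m:ℝ) + 1 := by
                have : (N:ℝ) ≤ m := by exact_mod_cast (by omega : N ≤ m)
                linarith
              push_cast
              linarith
            have hb2 : dist (u m : X) (x:X) ≤ 1 / (N + 1 : ℝ) := by
              refine (hud m).le.trans ?_
              rw [div_le_div_iff₀ (by positivity) (by positivity)]
              have : (N : ℝ) ≤ m := by exact_mod_cast (by omega : N ≤ m)
              push_cast
              linarith
            have : 2 / (N + 1 : ℝ) = 1 / (N+1) + 1 / (N+1) := by ring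
            rw [this]
            exact add_le_add hb1 hb2
      · simp
    have htend : Tendsto (fun N : ℕ => ENNReal.ofReal (2 / (N + 1))) atTop (𝓝 0) := by
      rw [← ENNReal.ofReal_zero]
      refine ENNReal.tendsto_ofReal ?_
      have := tendsto_one_div_add_atTop_nhds_zero_nat.const_mul (2:ℝ)
      simpa [div_eq_mul_inv, mul_comm] using this
    exact ge_of_tendsto' htend key
end

section
/- Let (X,d) be a metric space with basepoint a_0 and let p ∈ [1,∞]. If the space D_p(X,{a_0}) of p-persistence diagrams with the p-Wasserstein (or bottleneck, if p = ∞) distance is a complete (pseudo)metric space, then X is complete. -/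
open scoped ENNReal
open Filter Metric Set

/-- The `p`-Wasserstein (`p = ∞`: bottleneck) distance between representatives of
persistence diagrams on `(X, A)`. -/
noncomputable def pdist {X : Type*} [MetricSpace X] (A : Set X) (p : ℝ≥0∞)
    (f g : ℕ → X) : ℝ≥0∞ :=
  ⨅ (α : ℕ → X) (_ : ∀ n, α n ∈ A) (β : ℕ → X) (_ : ∀ n, β n ∈ A)
    (e : (ℕ ⊕ ℕ) ≃ (ℕ ⊕ ℕ)),
      if p = ⊤ then ⨆ n : ℕ ⊕ ℕ, edist (Sum.elim f α n) (Sum.elim g β (e n))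
      else (∑' n : ℕ ⊕ ℕ, edist (Sum.elim f α n) (Sum.elim g β (e n)) ^ p.toReal) ^ (1 / p.toReal)

private lemma pdist_le_edist {X : Type*} [MetricSpace X] (a₀ : X) (p : ℝ≥0∞) (hp : 1 ≤ p)
    (f g : ℕ → X) (hf : ∀ n, n ≠ 0 → f n = a₀) (hg : ∀ n, n ≠ 0 → g n = a₀) :
    pdist {a₀} p f g ≤ edist (f 0) (g 0) := by
  have key : ∀ n : ℕ ⊕ ℕ, n ≠ Sum.inl 0 →
      edist (Sum.elim f (fun _ : ℕ => a₀) n) (Sum.elim g (fun _ : ℕ => a₀) n) = 0 := by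
    rintro (m | m) h
    · have hm : m ≠ 0 := by rintro rfl; exact h rfl
      simp [hf m hm, hg m hm]
    · simp
  have hp0 : p ≠ 0 := by intro h; rw [h] at hp; simp at hp
  unfold pdist
  apply iInf_le_of_le (fun _ => a₀)
  apply iInf_le_of_le (fun _ => rfl)
  apply iInf_le_of_le (fun _ => a₀)
  apply iInf_le_of_le (fun _ => rfl)
  apply iInf_le_of_le (Equiv.refl _)
  by_cases hptop : p = ⊤
  · rw [if_pos hptop]
    refine iSup_le fun n => ?_
    by_cases hn : n = Sum.inl 0
    · subst hn; simp
    · simp [key n hn]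
  · have hpr : 0 < p.toReal := ENNReal.toReal_pos hp0 hptop
    rw [if_neg hptop]
    rw [tsum_eq_single (Sum.inl 0) (fun n hn => by
      simp only [Equiv.refl_apply]
      rw [key n hn, ENNReal.zero_rpow_of_pos hpr])]
    simp only [Equiv.refl_apply, Sum.elim_inl]
    rw [← ENNReal.rpow_mul, mul_one_div_cancel hpr.ne', ENNReal.rpow_one]

private lemma exists_matching {X : Type*} [MetricSpace X] (a₀ : X) (p : ℝ≥0∞) (hp : 1 ≤ p)
    (f g : ℕ → X) {ε : ℝ≥0∞} (h : pdist {a₀} p f g < ε) :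
    ∃ e : (ℕ ⊕ ℕ) ≃ (ℕ ⊕ ℕ), ∀ n,
      edist (Sum.elim f (fun _ : ℕ => a₀) n) (Sum.elim g (fun _ : ℕ => a₀) (e n)) < ε := by
  have hp0 : p ≠ 0 := by intro h'; rw [h'] at hp; simp at hp
  unfold pdist at h
  simp only [iInf_lt_iff] at h
  obtain ⟨α, hα, β, hβ, e, he⟩ := h
  have hα' : α = fun _ => a₀ := funext fun n => hα n
  have hβ' : β = fun _ => a₀ := funext fun n => hβ n
  subst hα' hβ'
  refine ⟨e, fun n => ?_⟩
  by_cases hptop : p = ⊤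
  · rw [if_pos hptop] at he
    exact lt_of_le_of_lt (le_iSup (fun m => edist (Sum.elim f (fun _ : ℕ => a₀) m) (Sum.elim g (fun _ : ℕ => a₀) (e m))) n) he
  · rw [if_neg hptop] at he
    have hpr : 0 < p.toReal := ENNReal.toReal_pos hp0 hptop
    have h1 : (∑' m : ℕ ⊕ ℕ, edist (Sum.elim f (fun _ : ℕ => a₀) m)
        (Sum.elim g (fun _ : ℕ => a₀) (e m)) ^ p.toReal) < ε ^ p.toReal := by
      have h2 := ENNReal.rpow_lt_rpow he hpr
      rwa [← ENNReal.rpow_mul, one_div_mul_cancel hpr.ne', ENNReal.rpow_one] at h2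
    exact (ENNReal.rpow_lt_rpow_iff hpr).mp (lt_of_le_of_lt (ENNReal.le_tsum n) h1)
/-- If `D_p(X, {a₀})` is complete (every Cauchy sequence of `p`-persistence diagrams
converges to a `p`-persistence diagram), then `X` is complete. -/
theorem stmt_3 {X : Type*} [MetricSpace X] (a₀ : X) (p : ℝ≥0∞) (hp : 1 ≤ p)
    (hcomp : ∀ σ : ℕ → ℕ → X,
      (∀ k, pdist {a₀} p (σ k) (fun _ => a₀) ≠ ⊤) →
      (∀ ε : ℝ≥0∞, 0 < ε → ∃ N, ∀ j k, N ≤ j → N ≤ k → pdist {a₀} p (σ j) (σ k) < ε) →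
      ∃ τ : ℕ → X, pdist {a₀} p τ (fun _ => a₀) ≠ ⊤ ∧
        Tendsto (fun k => pdist {a₀} p (σ k) τ) atTop (nhds 0)) :
    CompleteSpace X := by
  apply Metric.complete_of_cauchySeq_tendsto
  intro u hu
  set σ : ℕ → ℕ → X := fun k n => if n = 0 then u k else a₀ with hσdef
  have hσn : ∀ k n, n ≠ 0 → σ k n = a₀ := fun k n hn => if_neg hn
  have hσ0 : ∀ k, σ k 0 = u k := fun k => rfl
  have hfin : ∀ k, pdist {a₀} p (σ k) (fun _ => a₀) ≠ ⊤ := by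
    intro k
    exact ne_top_of_le_ne_top (edist_ne_top _ _)
      (pdist_le_edist a₀ p hp (σ k) (fun _ => a₀) (hσn k) (fun n _ => rfl))
  have hcauchy : ∀ ε : ℝ≥0∞, 0 < ε → ∃ N, ∀ j k, N ≤ j → N ≤ k → pdist {a₀} p (σ j) (σ k) < ε := by
    intro ε hε
    obtain ⟨N, hN⟩ := EMetric.cauchySeq_iff.mp hu ε hε
    exact ⟨N, fun j k hj hk => lt_of_le_of_lt
      (pdist_le_edist a₀ p hp _ _ (hσn j) (hσn k)) (hN j hj k hk)⟩
  obtain ⟨τ, hτfin, hτtend⟩ := hcomp σ hfin hcauchy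
  by_cases hb : ∀ ε : ℝ≥0∞, 0 < ε → ∀ N, ∃ k, N ≤ k ∧ edist (u k) a₀ < ε
  · -- limit is a₀
    refine ⟨a₀, EMetric.tendsto_atTop.mpr fun ε hε => ?_⟩
    obtain ⟨N, hN⟩ := EMetric.cauchySeq_iff.mp hu (ε / 2) (ENNReal.half_pos hε.ne')
    obtain ⟨k, hk, hk2⟩ := hb (ε / 2) (ENNReal.half_pos hε.ne') N
    refine ⟨N, fun m hm => lt_of_le_of_lt (edist_triangle _ (u k) _) ?_⟩
    calc edist (u m) (u k) + edist (u k) a₀ < ε / 2 + ε / 2 := ENNReal.add_lt_add (hN m hm k hk) hk2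
      _ = ε := ENNReal.add_halves ε
  · push_neg at hb
    obtain ⟨δ, hδ, N, hN⟩ := hb
    set δ' : ℝ≥0∞ := min δ 1 with hδ'def
    have hδ'0 : δ' ≠ 0 := (lt_min hδ zero_lt_one).ne'
    have hδ'top : δ' ≠ ⊤ := ne_top_of_le_ne_top ENNReal.one_ne_top (min_le_right _ _)
    have hδ'le : ∀ k, N ≤ k → δ' ≤ edist (u k) a₀ := fun k hk =>
      le_trans (min_le_left _ _) (hN k hk)
    set η : ℝ≥0∞ := δ' / 2 with hηdef
    have hη0 : η ≠ 0 := (ENNReal.half_pos hδ'0).ne'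
    have hηlt : η < δ' := ENNReal.half_lt_self hδ'0 hδ'top
    have key : ∀ (k : ℕ) (ε : ℝ≥0∞), N ≤ k → ε ≤ η → pdist {a₀} p (σ k) τ < ε →
        ∃ n, edist (u k) (τ n) < ε ∧ ∀ m, m ≠ n → edist (τ m) a₀ < ε := by
      intro k ε hk hεη hpd
      obtain ⟨e, he⟩ := exists_matching a₀ p hp (σ k) τ hpd
      rcases hmatch : e (Sum.inl 0) with n | m
      · refine ⟨n, ?_, ?_⟩
        · have h0 := he (Sum.inl 0); rw [hmatch] at h0
          simpa [hσ0 k] using h0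
        · intro m hm
          have hj := he (e.symm (Sum.inl m))
          rw [e.apply_symm_apply] at hj
          have hne : e.symm (Sum.inl m) ≠ Sum.inl 0 := by
            intro h
            apply hm
            have h2 := congrArg e h
            rw [e.apply_symm_apply, hmatch] at h2
            exact Sum.inl.inj h2
          have hval : Sum.elim (σ k) (fun _ : ℕ => a₀) (e.symm (Sum.inl m)) = a₀ := by
            rcases h' : e.symm (Sum.inl m) with a | b
            · have ha : a ≠ 0 := by rintro rfl; exact hne h'
              simp [hσn k a ha]
            · simp
          rw [hval] at hj
          simpa [edist_comm] using hj
      · exfalso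
        have h0 := he (Sum.inl 0); rw [hmatch] at h0
        simp only [Sum.elim_inl, Sum.elim_inr, hσ0 k] at h0
        exact absurd (hδ'le k hk) (not_le.mpr (lt_of_lt_of_le h0 (hεη.trans hηlt.le)))
    have hη2 : (0 : ℝ≥0∞) < η / 2 := ENNReal.half_pos hη0
    have hη2η : η / 2 ≤ η := ENNReal.half_le_self
    obtain ⟨K₁, hK₁⟩ := eventually_atTop.mp (hτtend.eventually (gt_mem_nhds hη2))
    obtain ⟨n₀, hn₀1, hn₀2⟩ := key (max N K₁) (η / 2) (le_max_left _ _) hη2η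
      (hK₁ (max N K₁) (le_max_right _ _))
    -- uniqueness of the matched index for any late k
    have huniq : ∀ (k : ℕ) (ε : ℝ≥0∞) (n : ℕ), N ≤ k → ε ≤ η / 2 →
        edist (u k) (τ n) < ε → n = n₀ := by
      intro k ε n hk hε hlt
      by_contra hne
      have h1 : edist (τ n) a₀ < η / 2 := hn₀2 n hne
      have h3 : δ' ≤ edist (u k) a₀ := hδ'le k hk
      have h4 : edist (u k) a₀ < δ' := by
        calc edist (u k) a₀ ≤ edist (u k) (τ n) + edist (τ n) a₀ := edist_triangle _ _ _
          _ < η / 2 + η / 2 := ENNReal.add_lt_add (lt_of_lt_of_le hlt hε) h1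
          _ = η := ENNReal.add_halves η
          _ < δ' := hηlt
      exact absurd h3 (not_le.mpr h4)
    refine ⟨τ n₀, EMetric.tendsto_atTop.mpr fun ε hε => ?_⟩
    have hε' : (0 : ℝ≥0∞) < min ε (η / 2) := lt_min hε hη2
    obtain ⟨K₂, hK₂⟩ := eventually_atTop.mp (hτtend.eventually (gt_mem_nhds hε'))
    refine ⟨max N K₂, fun k hk => ?_⟩
    have hkN : N ≤ k := le_trans (le_max_left _ _) hk
    obtain ⟨n, hn1, hn2⟩ := key k (min ε (η / 2)) hkN ((min_le_right _ _).trans hη2η)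
      (hK₂ k (le_trans (le_max_right _ _) hk))
    have hnn₀ : n = n₀ := huniq k (min ε (η / 2)) n hkN (min_le_right _ _) hn1
    rw [hnn₀] at hn1
    exact lt_of_lt_of_le hn1 (min_le_left _ _)
end

section
/- Let (X,a_0) be a pointed metric space and let (σ_n) be a Cauchy sequence in the pseudometric space D_∞(X,{a_0}). Then there exists a Cauchy sequence (σ̂_n) in ℓ_∞(X,a_0) (bounded sequences with the supremum metric) such that for every n the multiset underlying σ̂_n represents the diagram σ_n. -/
open scoped ENNReal
open Filter Metric Set

/-- Padding of a representative by the base point on a second copy of `ℕ`. -/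
noncomputable def pad {X : Type*} [MetricSpace X] (a₀ : X) (f : ℕ → X) : ℕ ⊕ ℕ → X :=
  Sum.elim f fun _ => a₀

/-- Sup distance between functions on `ℕ ⊕ ℕ`. -/
noncomputable def DD {X : Type*} [MetricSpace X] (u v : ℕ ⊕ ℕ → X) : ℝ≥0∞ :=
  ⨆ m, edist (u m) (v m)

lemma DD_comm {X : Type*} [MetricSpace X] (u v : ℕ ⊕ ℕ → X) : DD u v = DD v u := by
  simp [DD, edist_comm]

lemma DD_triangle {X : Type*} [MetricSpace X] (u v w : ℕ ⊕ ℕ → X) :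
    DD u w ≤ DD u v + DD v w := by
  refine iSup_le fun m => (edist_triangle _ (v m) _).trans ?_
  exact add_le_add (le_iSup (fun m => edist (u m) (v m)) m)
    (le_iSup (fun m => edist (v m) (w m)) m)

lemma DD_comp_symm {X : Type*} [MetricSpace X] (u v : ℕ ⊕ ℕ → X)
    (e c : (ℕ ⊕ ℕ) ≃ (ℕ ⊕ ℕ)) :
    DD (fun m => u ((e.trans c).symm m)) (fun m => v (c.symm m)) ≤
      ⨆ q, edist (u q) (v (e q)) := by
  refine iSup_le fun m => ?_
  have h := le_iSup (fun q => edist (u q) (v (e q))) (e.symm (c.symm m))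
  simpa using h

lemma bdist_lt_extract {X : Type*} [MetricSpace X] {a₀ : X} {f g : ℕ → X} {ε : ℝ≥0∞}
    (h : bdist {a₀} f g < ε) :
    ∃ e : (ℕ ⊕ ℕ) ≃ (ℕ ⊕ ℕ), (⨆ q, edist (pad a₀ f q) (pad a₀ g (e q))) < ε := by
  unfold bdist at h
  simp only [iInf_lt_iff] at h
  obtain ⟨α, hα, β, hβ, e, he⟩ := h
  have hα' : α = fun _ => a₀ := funext fun n => Set.eq_of_mem_singleton (hα n)
  have hβ' : β = fun _ => a₀ := funext fun n => Set.eq_of_mem_singleton (hβ n)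
  subst hα' hβ'
  exact ⟨e, he⟩

/-- Equivalence between the off-basepoint indices of a padded representative and those
of the original. -/
def padEquiv {X : Type*} [MetricSpace X] (a₀ : X) (f : ℕ → X) :
    {m : ℕ ⊕ ℕ // Sum.elim f (fun _ => a₀) m ∉ ({a₀} : Set X)} ≃
      {n : ℕ // f n ∉ ({a₀} : Set X)} where
  toFun := fun p => match p with
    | ⟨Sum.inl n, h⟩ => ⟨n, h⟩
    | ⟨Sum.inr _, h⟩ => absurd rfl h
  invFun := fun q => ⟨Sum.inl q.1, q.2⟩
  left_inv := fun p => match p with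
    | ⟨Sum.inl _, _⟩ => rfl
    | ⟨Sum.inr _, h⟩ => absurd rfl h
  right_inv := fun _ => rfl

lemma padEquiv_spec {X : Type*} [MetricSpace X] (a₀ : X) (f : ℕ → X)
    (q : {m : ℕ ⊕ ℕ // Sum.elim f (fun _ => a₀) m ∉ ({a₀} : Set X)}) :
    f ((padEquiv a₀ f q).1) = Sum.elim f (fun _ => a₀) q.1 := by
  obtain ⟨m, h⟩ := q
  cases m with
  | inl n => rfl
  | inr n => exact absurd rfl h

lemma diagEquiv_pad {X : Type*} [MetricSpace X] (a₀ : X) (f : ℕ → X) (ψ : ℕ ≃ ℕ ⊕ ℕ) :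
    DiagEquiv {a₀} (fun n => Sum.elim f (fun _ => a₀) (ψ n)) f := by
  refine ⟨(Equiv.subtypeEquiv ψ (fun _ => Iff.rfl)).trans (padEquiv a₀ f), ?_⟩
  rintro ⟨n, h⟩
  exact padEquiv_spec a₀ f ⟨ψ n, h⟩

/-- Every Cauchy sequence `σ` in `D_∞(X, {a₀})` can be lifted to a Cauchy sequence in
`ℓ_∞(X, a₀)` (bounded sequences with the supremum metric) whose terms represent the
corresponding diagrams. -/
theorem stmt_6 {X : Type*} [MetricSpace X] (a₀ : X) (σ : ℕ → ℕ → X)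
    (hd : ∀ k, IsDiagram {a₀} (σ k))
    (hc : ∀ ε : ℝ≥0∞, 0 < ε → ∃ N, ∀ j k, N ≤ j → N ≤ k → bdist {a₀} (σ j) (σ k) < ε) :
    ∃ τ : ℕ → ℕ → X,
      (∀ k, DiagEquiv {a₀} (τ k) (σ k)) ∧
      (∀ k, (⨆ n, edist (τ k n) a₀) ≠ ⊤) ∧
      ∀ ε : ℝ≥0∞, 0 < ε → ∃ N, ∀ j k, N ≤ j → N ≤ k →
        (⨆ n, edist (τ j n) (τ k n)) < ε := by
    classical
  -- choose the scales N i
  have hpos : ∀ i : ℕ, (0 : ℝ≥0∞) < 2⁻¹ ^ i := fun i =>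
    ENNReal.pow_pos (ENNReal.inv_pos.mpr (by norm_num)) i
  have hNex : ∀ i : ℕ, ∃ N, ∀ j k, N ≤ j → N ≤ k → bdist {a₀} (σ j) (σ k) < 2⁻¹ ^ i :=
    fun i => hc _ (hpos i)
  choose N' hN' using hNex
  set N : ℕ → ℕ := fun i => Nat.rec (N' 0) (fun i Ni => max (Ni + 1) (N' (i + 1))) i with hNdef
  have hNmono : StrictMono N := strictMono_nat_of_lt_succ fun i =>
    lt_of_lt_of_le (Nat.lt_succ_self _) (le_max_left _ _)
  have hNge : ∀ i, N' i ≤ N i := by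
    intro i
    cases i with
    | zero => exact le_rfl
    | succ i => exact le_max_right _ _
  have hN : ∀ i j k, N i ≤ j → N i ≤ k → bdist {a₀} (σ j) (σ k) < 2⁻¹ ^ i :=
    fun i j k hj hk => hN' i j k ((hNge i).trans hj) ((hNge i).trans hk)
  have hNle : ∀ i, i ≤ N i := fun i => hNmono.le_apply
  -- stage function
  set st : ℕ → ℕ := fun k => Nat.findGreatest (fun i => N i ≤ k) k with hstdef
  have hst1 : ∀ k, N 0 ≤ k → N (st k) ≤ k := fun k h =>
    Nat.findGreatest_spec (P := fun i => N i ≤ k) (Nat.zero_le k) h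
  have hst2 : ∀ i k, N i ≤ k → i ≤ st k := fun i k h =>
    Nat.le_findGreatest ((hNle i).trans h) h
  -- matchings along the chain
  have hgex : ∀ i : ℕ, ∃ e : (ℕ ⊕ ℕ) ≃ (ℕ ⊕ ℕ),
      (⨆ q, edist (pad a₀ (σ (N (i + 1))) q) (pad a₀ (σ (N i)) (e q))) < 2⁻¹ ^ i :=
    fun i => bdist_lt_extract (hN i (N (i + 1)) (N i) (hNmono.monotone (Nat.le_succ i)) le_rfl)
  choose g hg using hgex
  have hfex : ∀ k : ℕ, ∃ e : (ℕ ⊕ ℕ) ≃ (ℕ ⊕ ℕ), N 0 ≤ k →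
      (⨆ q, edist (pad a₀ (σ k) q) (pad a₀ (σ (N (st k))) (e q))) < 2⁻¹ ^ (st k) := by
    intro k
    by_cases h : N 0 ≤ k
    · obtain ⟨e, he⟩ := bdist_lt_extract (hN (st k) k (N (st k)) (hst1 k h) le_rfl)
      exact ⟨e, fun _ => he⟩
    · exact ⟨Equiv.refl _, fun h' => absurd h' h⟩
  choose f hf using hfex
  -- composed chain
  set c : ℕ → ((ℕ ⊕ ℕ) ≃ (ℕ ⊕ ℕ)) :=
    fun i => Nat.rec (Equiv.refl _) (fun i ci => (g i).trans ci) i with hcdef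
  set v : ℕ → (ℕ ⊕ ℕ) → X := fun i q => pad a₀ (σ (N i)) ((c i).symm q) with hvdef
  set u : ℕ → (ℕ ⊕ ℕ) → X := fun k q => pad a₀ (σ k) (((f k).trans (c (st k))).symm q)
    with hudef
  have hvstep : ∀ i, DD (v (i + 1)) (v i) ≤ 2⁻¹ ^ i := by
    intro i
    have h := DD_comp_symm (pad a₀ (σ (N (i + 1)))) (pad a₀ (σ (N i))) (g i) (c i)
    exact h.trans (hg i).le
  have huv : ∀ k, N 0 ≤ k → DD (u k) (v (st k)) ≤ 2⁻¹ ^ (st k) := by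
    intro k hk
    have h := DD_comp_symm (pad a₀ (σ k)) (pad a₀ (σ (N (st k)))) (f k) (c (st k))
    exact h.trans (hf k hk).le
  -- chain bound
  have hanti : ∀ {a b : ℕ}, a ≤ b → (2⁻¹ : ℝ≥0∞) ^ b ≤ 2⁻¹ ^ a := fun h =>
    pow_le_pow_right_of_le_one' (ENNReal.inv_le_one.mpr one_le_two) h
  have hchain : ∀ i d, DD (v (i + d)) (v i) ≤ 2⁻¹ ^ i * 2 := by
    have h1 : ∀ i d, DD (v (i + d)) (v i) ≤ ∑ t ∈ Finset.range d, 2⁻¹ ^ (i + t) := by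
      intro i d
      induction d with
      | zero => simp [DD, edist_self]
      | succ d ih =>
        calc DD (v (i + (d + 1))) (v i)
            ≤ DD (v (i + d + 1)) (v (i + d)) + DD (v (i + d)) (v i) := by
              rw [← Nat.add_assoc]; exact DD_triangle _ _ _
          _ ≤ 2⁻¹ ^ (i + d) + ∑ t ∈ Finset.range d, 2⁻¹ ^ (i + t) :=
              add_le_add (hvstep _) ih
          _ = ∑ t ∈ Finset.range (d + 1), 2⁻¹ ^ (i + t) := by
              rw [Finset.sum_range_succ, add_comm]
    intro i d
    refine (h1 i d).trans ?_
    have h2 : ∑ t ∈ Finset.range d, (2⁻¹ : ℝ≥0∞) ^ (i + t)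
        = 2⁻¹ ^ i * ∑ t ∈ Finset.range d, 2⁻¹ ^ t := by
      rw [Finset.mul_sum]
      exact Finset.sum_congr rfl fun t _ => by rw [pow_add]
    rw [h2]
    refine mul_le_mul_right ?_ _
    refine (ENNReal.sum_le_tsum _).trans ?_
    rw [ENNReal.tsum_geometric, ENNReal.one_sub_inv_two, inv_inv]
  -- the lifted sequence
  set ι : ℕ ≃ ℕ ⊕ ℕ := (Denumerable.eqv (ℕ ⊕ ℕ)).symm with hιdef
  refine ⟨fun k n => u k (ι n), ?_, ?_, ?_⟩
  · intro k
    exact diagEquiv_pad a₀ (σ k) (ι.trans ((f k).trans (c (st k))).symm)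
  · intro k
    obtain ⟨b, hbA, hbne⟩ := hd k
    obtain ⟨e, he⟩ := bdist_lt_extract (lt_top_iff_ne_top.mpr hbne :
      bdist {a₀} (σ k) b < ⊤)
    have hb : pad a₀ b = fun _ => a₀ := by
      funext m
      cases m with
      | inl n => exact Set.eq_of_mem_singleton (hbA n)
      | inr n => rfl
    rw [hb] at he
    have hbound : (⨆ q, edist (pad a₀ (σ k) q) a₀) < ⊤ := he
    refine ne_top_of_le_ne_top hbound.ne ?_
    refine iSup_le fun n => ?_
    exact le_iSup (fun q => edist (pad a₀ (σ k) q) a₀) (((f k).trans (c (st k))).symm (ι n))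
  · intro ε hε
    obtain ⟨n, hn⟩ := ENNReal.exists_inv_two_pow_lt hε.ne'
    refine ⟨N (n + 3), fun j k hj hk => ?_⟩
    have hN0j : N 0 ≤ j := (hNmono.monotone (Nat.zero_le (n + 3))).trans hj
    have hN0k : N 0 ≤ k := (hNmono.monotone (Nat.zero_le (n + 3))).trans hk
    have hij : n + 3 ≤ st j := hst2 _ _ hj
    have hik : n + 3 ≤ st k := hst2 _ _ hk
    have key : DD (u j) (u k) < ε := by
      have t1 : DD (u j) (v (st j)) ≤ 2⁻¹ ^ (n + 3) := (huv j hN0j).trans (hanti hij)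
      have t2 : DD (v (st j)) (v (n + 3)) ≤ 2⁻¹ ^ (n + 3) * 2 := by
        obtain ⟨d, hd'⟩ := Nat.exists_eq_add_of_le hij
        rw [hd']; exact hchain _ _
      have t3 : DD (v (n + 3)) (v (st k)) ≤ 2⁻¹ ^ (n + 3) * 2 := by
        rw [DD_comm]
        obtain ⟨d, hd'⟩ := Nat.exists_eq_add_of_le hik
        rw [hd']; exact hchain _ _
      have t4 : DD (v (st k)) (u k) ≤ 2⁻¹ ^ (n + 3) := by
        rw [DD_comm]; exact (huv k hN0k).trans (hanti hik)
      have tri : DD (u j) (u k) ≤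
          DD (u j) (v (st j)) + DD (v (st j)) (v (n + 3)) +
            (DD (v (n + 3)) (v (st k)) + DD (v (st k)) (u k)) := by
        calc DD (u j) (u k) ≤ DD (u j) (v (n + 3)) + DD (v (n + 3)) (u k) :=
              DD_triangle _ _ _
          _ ≤ (DD (u j) (v (st j)) + DD (v (st j)) (v (n + 3))) +
                (DD (v (n + 3)) (v (st k)) + DD (v (st k)) (u k)) :=
              add_le_add (DD_triangle _ _ _) (DD_triangle _ _ _)
      have harith : (2⁻¹ : ℝ≥0∞) ^ (n + 3) + 2⁻¹ ^ (n + 3) * 2 +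
          (2⁻¹ ^ (n + 3) * 2 + 2⁻¹ ^ (n + 3)) < ε := by
        have h6 : (2⁻¹ : ℝ≥0∞) ^ (n + 3) + 2⁻¹ ^ (n + 3) * 2 +
            (2⁻¹ ^ (n + 3) * 2 + 2⁻¹ ^ (n + 3)) = 6 * 2⁻¹ ^ (n + 3) := by ring
        rw [h6]
        have h8 : (6 : ℝ≥0∞) * 2⁻¹ ^ (n + 3) ≤ 8 * 2⁻¹ ^ (n + 3) :=
          mul_le_mul_left (by norm_num) _
        refine lt_of_le_of_lt h8 ?_
        have heq : (8 : ℝ≥0∞) * 2⁻¹ ^ (n + 3) = 2⁻¹ ^ n := by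
          rw [pow_add]
          rw [show ((2 : ℝ≥0∞)⁻¹ ^ 3) = 8⁻¹ by rw [← ENNReal.inv_pow]; norm_num]
          rw [mul_comm ((2 : ℝ≥0∞)⁻¹ ^ n), ← mul_assoc,
            ENNReal.mul_inv_cancel (by norm_num) (by norm_num), one_mul]
        rw [heq]; exact hn
      exact lt_of_le_of_lt (tri.trans (add_le_add (add_le_add t1 t2) (add_le_add t3 t4)))
        harith
    refine lt_of_le_of_lt ?_ key
    exact iSup_le fun m => le_iSup (fun q => edist (u j q) (u k q)) (ι m)
end

section
/- For a metric pair (X,A), the pseudometric space D_∞(X,A) with the bottleneck distance is complete if and only if the quotient metric space X/A is complete. -/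
open scoped ENNReal
open Filter Metric Set

/-! ### Auxiliary lemmas -/

section qdAux
variable {X : Type*} [MetricSpace X] (A : Set X)

lemma qdist_nonneg' (x y : X) : 0 ≤ qdist A x y :=
  le_min dist_nonneg (add_nonneg Metric.infDist_nonneg Metric.infDist_nonneg)

lemma qdist_self' (x : X) : qdist A x x = 0 :=
  le_antisymm ((min_le_left _ _).trans_eq (dist_self x)) (qdist_nonneg' A x x)

lemma qdist_comm' (x y : X) : qdist A x y = qdist A y x := by
  unfold qdist; rw [dist_comm, add_comm]

lemma infDist_le_qdist_add' (x y : X) :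
    Metric.infDist x A ≤ qdist A x y + Metric.infDist y A := by
  rcases min_cases (dist x y) (Metric.infDist x A + Metric.infDist y A) with ⟨h, _⟩ | ⟨h, _⟩
  · have := Metric.infDist_le_infDist_add_dist (x := x) (y := y) (s := A)
    unfold qdist; rw [h]; linarith
  · unfold qdist; rw [h]; linarith [Metric.infDist_nonneg (s := A) (x := y)]

lemma qdist_triangle' (x y z : X) :
    qdist A x z ≤ qdist A x y + qdist A y z := by
  rcases min_cases (dist x y) (Metric.infDist x A + Metric.infDist y A) with ⟨h1, _⟩ | ⟨h1, _⟩ <;>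
  rcases min_cases (dist y z) (Metric.infDist y A + Metric.infDist z A) with ⟨h2, _⟩ | ⟨h2, _⟩ <;>
  unfold qdist <;> rw [h1, h2]
  · exact (min_le_left _ _).trans (dist_triangle x y z)
  · refine (min_le_right _ _).trans ?_
    have := Metric.infDist_le_infDist_add_dist (x := x) (y := y) (s := A)
    linarith [dist_comm x y]
  · refine (min_le_right _ _).trans ?_
    have := Metric.infDist_le_infDist_add_dist (x := z) (y := y) (s := A)
    linarith [dist_comm z y]
  · refine (min_le_right _ _).trans ?_
    linarith [Metric.infDist_nonneg (s := A) (x := y)]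

lemma qdist_mem_right' {a : X} (ha : a ∈ A) (x : X) :
    qdist A x a = Metric.infDist x A := by
  unfold qdist
  rw [Metric.infDist_zero_of_mem ha, add_zero]
  exact min_eq_right (Metric.infDist_le_dist_of_mem ha)

lemma infDist_le_qdist_mem_left' {a : X} (ha : a ∈ A) (x : X) :
    Metric.infDist x A ≤ qdist A a x := by
  rw [qdist_comm', qdist_mem_right' A ha]

end qdAux

/-- the "break some pairs" permutation -/
def brEquiv {ι : Type*} (P : ι → Prop) [DecidablePred P] (e : ι ≃ ι) :
    (ι ⊕ ι) ≃ (ι ⊕ ι) where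
  toFun := fun i => match i with
    | .inl n => if P n then .inr n else .inl (e n)
    | .inr m => if P (e.symm m) then .inl m else .inr (e.symm m)
  invFun := fun i => match i with
    | .inl m => if P (e.symm m) then .inr m else .inl (e.symm m)
    | .inr n => if P n then .inl n else .inr (e n)
  left_inv := by rintro (n | m) <;> dsimp only <;> split_ifs with h <;> simp [h]
  right_inv := by rintro (m | n) <;> dsimp only <;> split_ifs with h <;> simp [h]

@[simp] lemma brEquiv_inl {ι : Type*} (P : ι → Prop) [DecidablePred P] (e : ι ≃ ι) (n : ι) :
    brEquiv P e (Sum.inl n) = if P n then Sum.inr n else Sum.inl (e n) := rfl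

@[simp] lemma brEquiv_inr {ι : Type*} (P : ι → Prop) [DecidablePred P] (e : ι ≃ ι) (m : ι) :
    brEquiv P e (Sum.inr m) = if P (e.symm m) then Sum.inl m else Sum.inr (e.symm m) := rfl

/-- the codification bijection `ℕ⊕ℕ ≃ (ℕ⊕ℕ)⊕(ℕ⊕ℕ)` that is identity-like on `inl`. -/
noncomputable def codif : (ℕ ⊕ ℕ) ≃ ((ℕ ⊕ ℕ) ⊕ (ℕ ⊕ ℕ)) :=
  (Equiv.sumCongr (Equiv.refl ℕ) ((Denumerable.eqv (ℕ ⊕ (ℕ ⊕ ℕ))).symm)).trans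
    (Equiv.sumAssoc ℕ ℕ (ℕ ⊕ ℕ)).symm

@[simp] lemma codif_inl (k : ℕ) : codif (Sum.inl k) = Sum.inl (Sum.inl k) := rfl

lemma codif_inr_cases (j : ℕ) :
    (∃ j', codif (Sum.inr j) = Sum.inl (Sum.inr j')) ∨
    (∃ m, codif (Sum.inr j) = Sum.inr m) := by
  rcases h : (Denumerable.eqv (ℕ ⊕ (ℕ ⊕ ℕ))).symm j with j' | m
  · exact Or.inl ⟨j', by simp [codif, h]⟩
  · exact Or.inr ⟨m, by simp [codif, h]⟩

section main
variable {X : Type*} [MetricSpace X] {A : Set X} {a0 : X}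

lemma bdist_le_of_match (ha0 : a0 ∈ A) {f g : ℕ → X} {r : ℝ}
    (e : (ℕ ⊕ ℕ) ≃ (ℕ ⊕ ℕ))
    (h : ∀ n, qdist A (Sum.elim f (fun _ => a0) n) (Sum.elim g (fun _ => a0) (e n)) ≤ r) :
    bdist A f g ≤ ENNReal.ofReal r := by
  classical
  set F := Sum.elim f (fun _ : ℕ => a0) with hF
  set G := Sum.elim g (fun _ : ℕ => a0) with hG
  have hr0 : 0 ≤ r := le_trans (le_min dist_nonneg
    (add_nonneg Metric.infDist_nonneg Metric.infDist_nonneg)) (h (Sum.inl 0))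
  have key : ∀ ε : ℝ, 0 < ε → bdist A f g ≤ ENNReal.ofReal (r + ε) := by
    intro ε hε
    set P : (ℕ ⊕ ℕ) → Prop := fun n => ¬ (dist (F n) (G (e n)) ≤ r) with hP
    have hPsum : ∀ n, P n → Metric.infDist (F n) A + Metric.infDist (G (e n)) A ≤ r := by
      intro n hn
      have := h n
      unfold qdist at this
      rcases min_le_iff.mp this with h1 | h2
      · exact absurd h1 hn
      · exact h2
    have hEx : ∀ x : X, ∃ b ∈ A, dist x b ≤ Metric.infDist x A + ε := by
      intro x
      have : Metric.infDist x A < Metric.infDist x A + ε := by linarith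
      obtain ⟨b, hb, hbd⟩ := (Metric.infDist_lt_iff ⟨a0, ha0⟩).mp this
      exact ⟨b, hb, le_of_lt hbd⟩
    choose near hnearA hneard using hEx
    set cL : (ℕ ⊕ ℕ) → X := fun m => if P (e.symm m) then near (G m) else a0 with hcL
    set cR : (ℕ ⊕ ℕ) → X := fun n => if P n then near (F n) else a0 with hcR
    set BigL : ((ℕ ⊕ ℕ) ⊕ (ℕ ⊕ ℕ)) → X := Sum.elim F cL with hBigL
    set BigR : ((ℕ ⊕ ℕ) ⊕ (ℕ ⊕ ℕ)) → X := Sum.elim G cR with hBigR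
    have hcLA : ∀ m, cL m ∈ A := by
      intro m; rw [hcL]; dsimp only; split_ifs; exacts [hnearA _, ha0]
    have hcRA : ∀ n, cR n ∈ A := by
      intro n; rw [hcR]; dsimp only; split_ifs; exacts [hnearA _, ha0]
    have cost : ∀ i, edist (BigL i) (BigR (brEquiv P e i)) ≤ ENNReal.ofReal (r + ε) := by
      rintro (n | m)
      · rw [brEquiv_inl]
        split_ifs with hn
        · have h1 := hPsum n hn
          have h2 := hneard (F n)
          have : dist (BigL (Sum.inl n)) (BigR (Sum.inr n)) ≤ r + ε := by
            simp only [hBigL, hBigR, Sum.elim_inl, Sum.elim_inr, hcR, if_pos hn]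
            have := Metric.infDist_nonneg (s := A) (x := G (e n))
            linarith
          rw [edist_dist]; exact ENNReal.ofReal_le_ofReal this
        · have : dist (BigL (Sum.inl n)) (BigR (Sum.inl (e n))) ≤ r + ε := by
            simp only [hBigL, hBigR, Sum.elim_inl]
            replace hn : dist (F n) (G (e n)) ≤ r := by by_contra hc; exact hn hc
            linarith
          rw [edist_dist]; exact ENNReal.ofReal_le_ofReal this
      · rw [brEquiv_inr]
        split_ifs with hm
        · have h1 := hPsum (e.symm m) hm
          rw [Equiv.apply_symm_apply] at h1
          have h2 := hneard (G m)
          have : dist (BigL (Sum.inr m)) (BigR (Sum.inl m)) ≤ r + ε := by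
            simp only [hBigL, hBigR, Sum.elim_inl, Sum.elim_inr, hcL, if_pos hm]
            have := Metric.infDist_nonneg (s := A) (x := F (e.symm m))
            rw [dist_comm]
            linarith
          rw [edist_dist]; exact ENNReal.ofReal_le_ofReal this
        · have : dist (BigL (Sum.inr m)) (BigR (Sum.inr (e.symm m))) ≤ r + ε := by
            simp only [hBigL, hBigR, Sum.elim_inr, hcL, hcR, if_neg hm]
            rw [dist_self]
            linarith
          rw [edist_dist]; exact ENNReal.ofReal_le_ofReal this
    set α : ℕ → X := fun j => BigL (codif (Sum.inr j)) with hα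
    set β : ℕ → X := fun j => BigR (codif (Sum.inr j)) with hβ
    have hαA : ∀ j, α j ∈ A := by
      intro j
      rcases codif_inr_cases j with ⟨j', hj⟩ | ⟨m, hj⟩
      · rw [hα]; dsimp only; rw [hj]; exact ha0
      · rw [hα]; dsimp only; rw [hj]; exact hcLA m
    have hβA : ∀ j, β j ∈ A := by
      intro j
      rcases codif_inr_cases j with ⟨j', hj⟩ | ⟨m, hj⟩
      · rw [hβ]; dsimp only; rw [hj]; exact ha0
      · rw [hβ]; dsimp only; rw [hj]; exact hcRA m
    have hLid : ∀ n, Sum.elim f α n = BigL (codif n) := by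
      rintro (k | j)
      · simp [hBigL, hF]
      · simp [hα]
    have hGid : ∀ n, Sum.elim g β n = BigR (codif n) := by
      rintro (k | j)
      · simp [hBigR, hG]
      · simp [hβ]
    set e3 : (ℕ ⊕ ℕ) ≃ (ℕ ⊕ ℕ) := (codif.trans (brEquiv P e)).trans codif.symm with he3
    calc bdist A f g ≤ ⨆ n : ℕ ⊕ ℕ, edist (Sum.elim f α n) (Sum.elim g β (e3 n)) := by
          rw [bdist]
          refine le_trans (iInf_le _ α) ?_
          refine le_trans (iInf_le _ hαA) ?_
          refine le_trans (iInf_le _ β) ?_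
          refine le_trans (iInf_le _ hβA) ?_
          exact iInf_le _ e3
      _ ≤ ENNReal.ofReal (r + ε) := by
          refine iSup_le fun n => ?_
          rw [hLid, hGid]
          have : codif (e3 n) = brEquiv P e (codif n) := by
            rw [he3]; simp
          rw [this]
          exact cost (codif n)
  refine ENNReal.le_of_forall_pos_le_add fun ε hε _ => ?_
  have := key ε (by exact_mod_cast hε)
  rwa [ENNReal.ofReal_add hr0 (le_of_lt (by exact_mod_cast hε)),
    ENNReal.ofReal_coe_nnreal] at this

lemma match_of_bdist_lt (ha0 : a0 ∈ A) {f g : ℕ → X} {r : ℝ}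
    (h : bdist A f g < ENNReal.ofReal r) :
    ∃ e : (ℕ ⊕ ℕ) ≃ (ℕ ⊕ ℕ),
      ∀ n, qdist A (Sum.elim f (fun _ => a0) n) (Sum.elim g (fun _ => a0) (e n)) < r := by
  have hr : 0 < r := by
    by_contra hr
    rw [ENNReal.ofReal_eq_zero.mpr (not_lt.mp hr)] at h
    exact (not_lt.mpr zero_le) h
  rw [bdist] at h
  simp only [iInf_lt_iff] at h
  obtain ⟨α, hαA, β, hβA, e, hsup⟩ := h
  refine ⟨e, fun n => ?_⟩
  have hn : edist (Sum.elim f α n) (Sum.elim g β (e n)) < ENNReal.ofReal r :=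
    lt_of_le_of_lt
      (le_iSup (fun m => edist (Sum.elim f α m) (Sum.elim g β (e m))) n) hsup
  have key : ∀ (p q : ℕ ⊕ ℕ), qdist A (Sum.elim f (fun _ => a0) p) (Sum.elim g (fun _ => a0) q)
      ≤ dist (Sum.elim f α p) (Sum.elim g β q) := by
    rintro (k | j) (m | i)
    · exact min_le_left _ _
    · simp only [Sum.elim_inl, Sum.elim_inr]
      refine le_trans (min_le_right _ _) ?_
      rw [Metric.infDist_zero_of_mem ha0, add_zero]
      exact Metric.infDist_le_dist_of_mem (hβA i)
    · simp only [Sum.elim_inl, Sum.elim_inr]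
      refine le_trans (min_le_right _ _) ?_
      rw [Metric.infDist_zero_of_mem ha0, zero_add, dist_comm]
      exact Metric.infDist_le_dist_of_mem (hαA j)
    · simp only [Sum.elim_inr]
      refine le_trans (min_le_right _ _) ?_
      rw [Metric.infDist_zero_of_mem ha0, zero_add]
      exact dist_nonneg
  have : ENNReal.ofReal (dist (Sum.elim f α n) (Sum.elim g β (e n))) < ENNReal.ofReal r := by
    rwa [← edist_dist]
  have hd : dist (Sum.elim f α n) (Sum.elim g β (e n)) < r :=
    (ENNReal.ofReal_lt_ofReal_iff hr).mp this
  exact lt_of_le_of_lt (key n (e n)) hd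

/-- membership of a function in diagrams is equivalent to bounded distance to `A` -/
lemma bdd_of_isDiagram {f : ℕ → X} (h : IsDiagram A f) :
    ∃ C : ℝ, ∀ n, Metric.infDist (f n) A ≤ C := by
  obtain ⟨g, hgA, hfin⟩ := h
  have h : bdist A f g < ⊤ := lt_top_iff_ne_top.mpr hfin
  rw [bdist] at h
  simp only [iInf_lt_iff] at h
  obtain ⟨α, hαA, β, hβA, e, hsup⟩ := h
  refine ⟨(⨆ n : ℕ ⊕ ℕ, edist (Sum.elim f α n) (Sum.elim g β (e n))).toReal, fun n => ?_⟩
  have hle : edist (f n) (Sum.elim g β (e (Sum.inl n))) ≤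
      ⨆ m : ℕ ⊕ ℕ, edist (Sum.elim f α m) (Sum.elim g β (e m)) :=
    le_iSup (fun m => edist (Sum.elim f α m) (Sum.elim g β (e m))) (Sum.inl n)
  have hmem : Sum.elim g β (e (Sum.inl n)) ∈ A := by
    rcases he : e (Sum.inl n) with m | i
    · exact hgA m
    · exact hβA i
  calc Metric.infDist (f n) A ≤ dist (f n) (Sum.elim g β (e (Sum.inl n))) :=
        Metric.infDist_le_dist_of_mem hmem
    _ = (edist (f n) (Sum.elim g β (e (Sum.inl n)))).toReal := by rw [edist_dist,
        ENNReal.toReal_ofReal dist_nonneg]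
    _ ≤ _ := ENNReal.toReal_mono (ne_of_lt hsup) hle

lemma isDiagram_of_bdd (ha0 : a0 ∈ A) {f : ℕ → X} {C : ℝ}
    (h : ∀ n, Metric.infDist (f n) A ≤ C) : IsDiagram A f := by
  refine ⟨fun _ => a0, fun _ => ha0, ?_⟩
  have hb : bdist A f (fun _ => a0) ≤ ENNReal.ofReal (max C 0) := by
    refine bdist_le_of_match ha0 (Equiv.refl _) fun n => ?_
    have hright : Sum.elim (fun _ : ℕ => a0) (fun _ : ℕ => a0)
        ((Equiv.refl (ℕ ⊕ ℕ)) n) = a0 := by rcases n with k | j <;> rfl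
    rw [hright, qdist_mem_right' A ha0]
    rcases n with k | j
    · exact le_max_of_le_left (h k)
    · simp only [Sum.elim_inr]
      rw [Metric.infDist_zero_of_mem ha0]
      exact le_max_right _ _
  exact ne_top_of_le_ne_top ENNReal.ofReal_ne_top hb

variable (A a0) in
/-- a quotient-distance matching certificate at level `ε`. -/
def QClose (f g : ℕ → X) (ε : ℝ) : Prop :=
  ∃ e : (ℕ ⊕ ℕ) ≃ (ℕ ⊕ ℕ),
    ∀ n, qdist A (Sum.elim f (fun _ => a0) n) (Sum.elim g (fun _ => a0) (e n)) < ε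

lemma qclose_trans {f g h : ℕ → X} {ε₁ ε₂ : ℝ}
    (h1 : QClose A a0 f g ε₁) (h2 : QClose A a0 g h ε₂) : QClose A a0 f h (ε₁ + ε₂) := by
  obtain ⟨e1, he1⟩ := h1
  obtain ⟨e2, he2⟩ := h2
  refine ⟨e1.trans e2, fun n => ?_⟩
  have := qdist_triangle' A (Sum.elim f (fun _ => a0) n)
    (Sum.elim g (fun _ => a0) (e1 n)) (Sum.elim h (fun _ => a0) (e2 (e1 n)))
  have t1 := he1 n
  have t2 := he2 (e1 n)
  simp only [Equiv.trans_apply]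
  linarith

lemma bdist_le_of_qclose (ha0 : a0 ∈ A) {f g : ℕ → X} {ε : ℝ}
    (h : QClose A a0 f g ε) : bdist A f g ≤ ENNReal.ofReal ε := by
  obtain ⟨e, he⟩ := h
  exact bdist_le_of_match ha0 e fun n => le_of_lt (he n)

lemma qclose_of_bdist_lt (ha0 : a0 ∈ A) {f g : ℕ → X} {ε : ℝ}
    (h : bdist A f g < ENNReal.ofReal ε) : QClose A a0 f g ε :=
  match_of_bdist_lt ha0 h

end main

/-- `D_∞(X, A)` with the bottleneck distance is complete if and only if the quotient metric
space `X/A` is complete.  Both spaces are described via representatives: Cauchy sequences of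
diagrams converge to a diagram iff every `qdist`-Cauchy sequence in `X` converges, in the
quotient metric, to (the class of) a point of `X`. -/
theorem stmt_7 {X : Type*} [MetricSpace X] (A : Set X) (hA : A.Nonempty)
    (hAcl : IsClosed A) :
    (∀ σ : ℕ → ℕ → X, (∀ k, IsDiagram A (σ k)) →
        (∀ ε : ℝ≥0∞, 0 < ε → ∃ N, ∀ j k, N ≤ j → N ≤ k → bdist A (σ j) (σ k) < ε) →
        ∃ τ : ℕ → X, IsDiagram A τ ∧
          Tendsto (fun k => bdist A (σ k) τ) atTop (nhds 0))
    ↔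
    (∀ x : ℕ → X,
        (∀ ε : ℝ, 0 < ε → ∃ N, ∀ j k, N ≤ j → N ≤ k → qdist A (x j) (x k) < ε) →
        ∃ l : X, Tendsto (fun k => qdist A (x k) l) atTop (nhds 0)) := by
  obtain ⟨a0, ha0⟩ := hA
  constructor
  · -- diagram completeness → quotient completeness
    intro hD x hx
    set σ : ℕ → ℕ → X := fun k n => x (k + n) with hσ
    obtain ⟨N1, hN1⟩ := hx 1 one_pos
    set C : ℝ :=
      (Finset.range (N1 + 1)).sup' (by simp) (fun m => Metric.infDist (x m) A) + 1 with hCdef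
    have hC : ∀ m, Metric.infDist (x m) A ≤ C := by
      intro m
      rcases le_or_gt m N1 with hm | hm
      · have h1 : Metric.infDist (x m) A ≤
            (Finset.range (N1 + 1)).sup' (by simp) (fun m => Metric.infDist (x m) A) :=
          Finset.le_sup' (fun m => Metric.infDist (x m) A) (Finset.mem_range.mpr (by omega))
        rw [hCdef]; linarith
      · have h1 := hN1 m N1 (le_of_lt hm) le_rfl
        have h2 := infDist_le_qdist_add' A (x m) (x N1)
        have h3 : Metric.infDist (x N1) A ≤
            (Finset.range (N1 + 1)).sup' (by simp) (fun m => Metric.infDist (x m) A) :=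
          Finset.le_sup' (fun m => Metric.infDist (x m) A) (Finset.self_mem_range_succ N1)
        rw [hCdef]; linarith
    have hdiag : ∀ k, IsDiagram A (σ k) :=
      fun k => isDiagram_of_bdd ha0 (fun n => hC (k + n))
    have hcauchy : ∀ ε : ℝ≥0∞, 0 < ε →
        ∃ N, ∀ j k, N ≤ j → N ≤ k → bdist A (σ j) (σ k) < ε := by
      intro ε hε
      obtain ⟨p, hp0, hpε⟩ := ENNReal.lt_iff_exists_nnreal_btwn.mp hε
      have hp0' : (0 : ℝ) < p := by exact_mod_cast hp0
      obtain ⟨N, hN⟩ := hx ((p : ℝ) / 2) (by linarith)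
      refine ⟨N, fun j k hj hk => ?_⟩
      have hq : QClose A a0 (σ j) (σ k) ((p : ℝ) / 2) := by
        refine ⟨Equiv.refl _, fun n => ?_⟩
        rcases n with i | i
        · simp only [Equiv.refl_apply, Sum.elim_inl, hσ]
          exact hN (j + i) (k + i) (by omega) (by omega)
        · simp only [Equiv.refl_apply, Sum.elim_inr]
          rw [qdist_self']
          linarith
      calc bdist A (σ j) (σ k) ≤ ENNReal.ofReal ((p : ℝ) / 2) := bdist_le_of_qclose ha0 hq
        _ ≤ ENNReal.ofReal (p : ℝ) := ENNReal.ofReal_le_ofReal (by linarith)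
        _ = (p : ℝ≥0∞) := ENNReal.ofReal_coe_nnreal
        _ < ε := hpε
    obtain ⟨τ, hτdiag, hτlim⟩ := hD σ hdiag hcauchy
    have hQ : ∀ θ : ℝ, 0 < θ → ∃ M, ∀ k, M ≤ k → QClose A a0 (σ k) τ θ := by
      intro θ hθ
      have h2 : ∀ᶠ k in atTop, bdist A (σ k) τ < ENNReal.ofReal θ :=
        hτlim.eventually_lt_const (by simpa using hθ)
      obtain ⟨M, hM⟩ := eventually_atTop.mp h2
      exact ⟨M, fun k hk => qclose_of_bdist_lt ha0 (hM k hk)⟩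
    by_cases hcase : ∀ δ : ℝ, 0 < δ → ∀ N : ℕ, ∃ k, N ≤ k ∧ Metric.infDist (x k) A < δ
    · refine ⟨a0, ?_⟩
      rw [Metric.tendsto_atTop]
      intro ε hε
      obtain ⟨N, hN⟩ := hx (ε / 2) (by linarith)
      obtain ⟨k0, hk0, hk0'⟩ := hcase (ε / 2) (by linarith) N
      refine ⟨N, fun k hk => ?_⟩
      have h1 := hN k k0 hk hk0
      have h2 := infDist_le_qdist_add' A (x k) (x k0)
      rw [Real.dist_eq, sub_zero, abs_of_nonneg (qdist_nonneg' A _ _), qdist_mem_right' A ha0]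
      linarith
    · push_neg at hcase
      obtain ⟨δ, hδ, N0, hN0⟩ := hcase
      have hN0' : ∀ k, N0 ≤ k → δ ≤ Metric.infDist (x k) A := fun k hk => hN0 k hk
      obtain ⟨K0, hK0⟩ := hQ (δ / 2) (by linarith)
      set K := max K0 N0 with hK
      obtain ⟨e0, he0⟩ := hK0 K (le_max_left _ _)
      have hKN0 : δ ≤ Metric.infDist (x K) A := hN0' K (le_max_right _ _)
      have habs : ∀ j, e0 (Sum.inl 0) = Sum.inr j → False := by
        intro j he00
        have h := he0 (Sum.inl 0)
        rw [he00] at h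
        simp only [Sum.elim_inl, Sum.elim_inr] at h
        rw [qdist_mem_right' A ha0] at h
        have hxx : σ K 0 = x K := by simp [hσ]
        rw [hxx] at h
        linarith
      rcases he00 : e0 (Sum.inl 0) with m0 | j
      swap
      · exact absurd (habs j he00) not_false
      ·
        set l := τ m0 with hl
        have hlA : δ / 2 ≤ Metric.infDist l A := by
          have h := he0 (Sum.inl 0)
          rw [he00] at h
          simp only [Sum.elim_inl] at h
          have h2 := infDist_le_qdist_add' A (x K) (τ m0)
          have hxx : σ K 0 = x K := by simp [hσ]
          rw [hxx] at h
          rw [hl]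
          linarith
        refine ⟨l, ?_⟩
        rw [Metric.tendsto_atTop]
        intro ε hε
        set θ := min (ε / 2) (δ / 4) with hθ
        have hθpos : 0 < θ := lt_min (by linarith) (by linarith)
        obtain ⟨Mθ, hMθ⟩ := hQ θ hθpos
        obtain ⟨N2, hN2⟩ := hx (ε / 2) (by linarith)
        refine ⟨max Mθ N2, fun k hk => ?_⟩
        obtain ⟨e, he⟩ := hMθ k (le_trans (le_max_left _ _) hk)
        have h := he (e.symm (Sum.inl m0))
        rw [Equiv.apply_symm_apply] at h
        simp only [Sum.elim_inl] at h
        rcases hen : e.symm (Sum.inl m0) with n'' | j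
        swap
        · exfalso
          rw [hen] at h
          simp only [Sum.elim_inr] at h
          have h2 := infDist_le_qdist_mem_left' A ha0 (τ m0)
          have : θ ≤ δ / 2 := le_trans (min_le_right _ _) (by linarith)
          linarith
        · rw [hen] at h
          simp only [Sum.elim_inl] at h
          have hxx : σ k n'' = x (k + n'') := by simp [hσ]
          rw [hxx] at h
          have htri := qdist_triangle' A (x k) (x (k + n'')) l
          have hcau := hN2 k (k + n'')
            (le_trans (le_max_right _ _) hk) (le_trans (le_trans (le_max_right _ _) hk) (by omega))
          rw [Real.dist_eq, sub_zero, abs_of_nonneg (qdist_nonneg' A _ _)]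
          have hθε : θ ≤ ε / 2 := min_le_left _ _
          rw [hl] at htri ⊢
          linarith
  · -- quotient completeness → diagram completeness
    intro hq σ hσdiag hσcauchy
    have h2 : ∀ i : ℕ, ∃ N : ℕ, ∀ j k, N ≤ j → N ≤ k →
        QClose A a0 (σ j) (σ k) ((1/2 : ℝ) ^ i) := by
      intro i
      have hpos : (0 : ℝ) < (1/2 : ℝ) ^ i := by positivity
      obtain ⟨N, hN⟩ := hσcauchy (ENNReal.ofReal ((1/2 : ℝ) ^ i)) (by simpa using hpos)
      exact ⟨N, fun j k hj hk => qclose_of_bdist_lt ha0 (hN j k hj hk)⟩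
    choose Nf hNf using h2
    set nn : ℕ → ℕ := fun i => (Finset.range (i+1)).sup Nf with hnn
    have hnn_ge : ∀ i, Nf i ≤ nn i := fun i => Finset.le_sup (by simp)
    have hnn_mono : Monotone nn := fun i j hij =>
      Finset.sup_mono (Finset.range_subset_range.mpr (by omega))
    set ρ : ℕ → ℕ → X := fun i => σ (nn i) with hρ
    have hstep : ∀ i, QClose A a0 (ρ i) (ρ (i+1)) ((1/2 : ℝ) ^ i) := fun i =>
      hNf i (nn i) (nn (i+1)) (hnn_ge i) (le_trans (hnn_ge i) (hnn_mono (by omega)))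
    choose ee hee using hstep
    set E : ℕ → ((ℕ ⊕ ℕ) ≃ (ℕ ⊕ ℕ)) :=
      fun i => Nat.rec (Equiv.refl _) (fun i E => E.trans (ee i)) i with hE
    have hEsucc : ∀ i m, E (i+1) m = ee i (E i m) := fun i m => rfl
    set t : (ℕ ⊕ ℕ) → ℕ → X := fun m i => Sum.elim (ρ i) (fun _ => a0) (E i m) with ht
    have htstep : ∀ m i, qdist A (t m i) (t m (i+1)) < (1/2 : ℝ) ^ i := by
      intro m i
      have h := hee i (E i m)
      rw [ht]; dsimp only
      rw [hEsucc]
      exact h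
    have hgeo : ∀ m i j, i ≤ j →
        qdist A (t m i) (t m j) ≤ 2*(1/2 : ℝ)^i - 2*(1/2 : ℝ)^j := by
      intro m i j hij
      induction j, hij using Nat.le_induction with
      | base => rw [qdist_self']; simp
      | succ j hij ih =>
        have h1 := htstep m j
        have h2 := qdist_triangle' A (t m i) (t m j) (t m (j+1))
        have h3 : (2 : ℝ)*(1/2)^(j+1) = (1/2)^j := by ring
        linarith
    have htc : ∀ m, ∀ ε : ℝ, 0 < ε → ∃ N, ∀ i j, N ≤ i → N ≤ j →
        qdist A (t m i) (t m j) < ε := by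
      intro m ε hε
      obtain ⟨N, hN⟩ := exists_pow_lt_of_lt_one (show (0:ℝ) < ε/2 by linarith)
        (show (1/2 : ℝ) < 1 by norm_num)
      refine ⟨N, fun i j hi hj => ?_⟩
      have key : ∀ i j, N ≤ i → i ≤ j → qdist A (t m i) (t m j) < ε := by
        intro i j hi hij
        have hg := hgeo m i j hij
        have hpow : (1/2 : ℝ)^i ≤ (1/2)^N :=
          pow_le_pow_of_le_one (by norm_num) (by norm_num) hi
        have hpos : (0:ℝ) ≤ (1/2 : ℝ)^j := by positivity
        linarith
      rcases le_total i j with hij | hij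
      · exact key i j hi hij
      · rw [qdist_comm']; exact key j i hj hij
    have hlim : ∀ m, ∃ lm, Tendsto (fun i => qdist A (t m i) lm) atTop (nhds 0) :=
      fun m => hq (t m) (htc m)
    choose l hl using hlim
    have hlbound : ∀ m i, qdist A (t m i) (l m) ≤ 2*(1/2 : ℝ)^i := by
      intro m i
      by_contra hcon
      push_neg at hcon
      set η := qdist A (t m i) (l m) - 2*(1/2 : ℝ)^i with hη
      have hηpos : 0 < η := by rw [hη]; linarith
      have hlm := hl m
      rw [Metric.tendsto_atTop] at hlm
      obtain ⟨J, hJ⟩ := hlm η hηpos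
      have h1 := hJ (max i J) (le_max_right _ _)
      rw [Real.dist_eq, sub_zero, abs_of_nonneg (qdist_nonneg' A _ _)] at h1
      have hg := hgeo m i (max i J) (le_max_left _ _)
      have h3 := qdist_triangle' A (t m i) (t m (max i J)) (l m)
      have hpos : (0:ℝ) ≤ 2*(1/2 : ℝ)^(max i J) := by positivity
      rw [hη] at h1
      linarith
    obtain ⟨C0, hC0⟩ := bdd_of_isDiagram (hσdiag (nn 0))
    have hlinf : ∀ m, Metric.infDist (l m) A ≤ max C0 0 + 2 := by
      intro m
      have h1 := infDist_le_qdist_add' A (l m) (t m 0)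
      have h2 := hlbound m 0
      have h3 : Metric.infDist (t m 0) A ≤ max C0 0 := by
        rcases m with k | j
        · show Metric.infDist (σ (nn 0) k) A ≤ max C0 0
          exact le_max_of_le_left (hC0 k)
        · show Metric.infDist a0 A ≤ max C0 0
          rw [Metric.infDist_zero_of_mem ha0]
          exact le_max_right _ _
      have h4 : qdist A (l m) (t m 0) = qdist A (t m 0) (l m) := qdist_comm' A _ _
      rw [h4] at h1
      have h5 : (2 : ℝ)*(1/2)^(0:ℕ) = 2 := by norm_num
      rw [h5] at h2
      linarith
    set ν : ℕ ≃ (ℕ ⊕ ℕ) := (Denumerable.eqv (ℕ ⊕ ℕ)).symm with hν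
    set τ : ℕ → X := fun k => l (ν k) with hτ
    have hτdiag : IsDiagram A τ := isDiagram_of_bdd ha0 (fun k => hlinf (ν k))
    have hcl : ∀ i, QClose A a0 (ρ i) τ (3*(1/2 : ℝ)^i) := by
      intro i
      have hpossmall : (0:ℝ) < (1/2 : ℝ)^i := by positivity
      refine ⟨(Equiv.sumCongr (Equiv.refl ℕ) ν).trans
        ((Equiv.sumAssoc ℕ ℕ ℕ).symm.trans
          (Equiv.sumCongr ((E i).symm.trans ν.symm) (Equiv.refl ℕ))), fun n => ?_⟩
      rcases n with k | j
      · have hcomp : ((Equiv.sumCongr (Equiv.refl ℕ) ν).trans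
            ((Equiv.sumAssoc ℕ ℕ ℕ).symm.trans
              (Equiv.sumCongr ((E i).symm.trans ν.symm) (Equiv.refl ℕ)))) (Sum.inl k)
            = Sum.inl (ν.symm ((E i).symm (Sum.inl k))) := rfl
        rw [hcomp]
        simp only [Sum.elim_inl]
        rw [hτ]; dsimp only
        rw [Equiv.apply_symm_apply]
        have hkey : Sum.elim (ρ i) (fun _ : ℕ => a0) (Sum.inl k)
            = t ((E i).symm (Sum.inl k)) i := by
          rw [ht]; dsimp only
          rw [Equiv.apply_symm_apply]
        have := hlbound ((E i).symm (Sum.inl k)) i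
        rw [← hkey] at this
        simp only [Sum.elim_inl] at this
        linarith
      · rcases hj : ν j with j₁ | j₂
        · have hcomp : ((Equiv.sumCongr (Equiv.refl ℕ) ν).trans
              ((Equiv.sumAssoc ℕ ℕ ℕ).symm.trans
                (Equiv.sumCongr ((E i).symm.trans ν.symm) (Equiv.refl ℕ)))) (Sum.inr j)
              = Sum.inl (ν.symm ((E i).symm (Sum.inr j₁))) := by
            simp only [Equiv.trans_apply, Equiv.sumCongr_apply, Equiv.refl_apply,
              Sum.map_inr, Sum.map_inl, hj, Equiv.sumAssoc_symm_apply_inr_inl]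
          rw [hcomp]
          simp only [Sum.elim_inl, Sum.elim_inr]
          rw [hτ]; dsimp only
          rw [Equiv.apply_symm_apply]
          set m' := (E i).symm (Sum.inr j₁) with hm'
          have hq1 : qdist A a0 (l m') = Metric.infDist (l m') A := by
            rw [qdist_comm', qdist_mem_right' A ha0]
          have hq2 := infDist_le_qdist_add' A (l m') (t m' i)
          have hq3 : t m' i = a0 := by
            rw [ht]; dsimp only
            rw [hm', Equiv.apply_symm_apply]
            rfl
          have hq4 := hlbound m' i
          rw [hq3] at hq2 hq4
          rw [Metric.infDist_zero_of_mem ha0] at hq2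
          have hq5 : qdist A (l m') a0 = qdist A a0 (l m') := qdist_comm' A _ _
          rw [hq5, hq1] at hq2
          have hq6 : qdist A a0 (l m') = qdist A (l m') a0 := qdist_comm' A _ _
          rw [hq1]
          rw [qdist_comm'] at hq4
          linarith
        · have hcomp : ((Equiv.sumCongr (Equiv.refl ℕ) ν).trans
              ((Equiv.sumAssoc ℕ ℕ ℕ).symm.trans
                (Equiv.sumCongr ((E i).symm.trans ν.symm) (Equiv.refl ℕ)))) (Sum.inr j)
              = Sum.inr j₂ := by
            simp only [Equiv.trans_apply, Equiv.sumCongr_apply, Equiv.refl_apply,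
              Sum.map_inr, Sum.map_inl, hj, Equiv.sumAssoc_symm_apply_inr_inr]
          rw [hcomp]
          simp only [Sum.elim_inr]
          rw [qdist_self']
          linarith
    refine ⟨τ, hτdiag, ?_⟩
    rw [ENNReal.tendsto_atTop_zero]
    intro ε hε
    obtain ⟨p, hp0, hpε⟩ := ENNReal.lt_iff_exists_nnreal_btwn.mp hε
    have hp0' : (0 : ℝ) < p := by exact_mod_cast hp0
    obtain ⟨i, hi⟩ := exists_pow_lt_of_lt_one (show (0:ℝ) < (p:ℝ)/4 by linarith)
      (show (1/2 : ℝ) < 1 by norm_num)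
    refine ⟨nn i, fun k hk => ?_⟩
    have hq1 : QClose A a0 (σ k) (ρ i) ((1/2 : ℝ)^i) :=
      hNf i k (nn i) (le_trans (hnn_ge i) hk) (hnn_ge i)
    have hq2 := qclose_trans hq1 (hcl i)
    have hb := bdist_le_of_qclose ha0 hq2
    calc bdist A (σ k) τ ≤ ENNReal.ofReal ((1/2:ℝ)^i + 3*(1/2:ℝ)^i) := hb
      _ ≤ ENNReal.ofReal (p : ℝ) := ENNReal.ofReal_le_ofReal (by linarith)
      _ = (p : ℝ≥0∞) := ENNReal.ofReal_coe_nnreal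
      _ ≤ ε := le_of_lt hpε
end

section
/- Let (X,A) be a metric pair such that for some D > δ > 0 the set B_D(A) \ B_δ(A) is not totally bounded. Then the pseudometric space D_∞(X,A) with the bottleneck distance is not separable. -/
open scoped ENNReal
open Filter Metric Set
open scoped Classical

/-- Extraction of a matching with small sup from a small bdist. -/
lemma bdist_lt_iff {X : Type*} [MetricSpace X] (A : Set X) (f g : ℕ → X) (c : ℝ≥0∞)
    (h : bdist A f g < c) :
    ∃ (α : ℕ → X), (∀ n, α n ∈ A) ∧ ∃ (β : ℕ → X), (∀ n, β n ∈ A) ∧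
      ∃ (e : (ℕ ⊕ ℕ) ≃ (ℕ ⊕ ℕ)),
        ∀ n, edist (Sum.elim f α n) (Sum.elim g β (e n)) < c := by
  simp only [bdist, iInf_lt_iff] at h
  obtain ⟨α, hα, β, hβ, e, he⟩ := h
  exact ⟨α, hα, β, hβ, e, fun n => lt_of_le_of_lt (le_iSup (fun n => edist (Sum.elim f α n) (Sum.elim g β (e n))) n) he⟩

/-- Key separation lemma. -/
lemma key_sep {X : Type*} [MetricSpace X] (A : Set X) (x : ℕ → X) (a0 : X) (ha0 : a0 ∈ A)
    (δ ε : ℝ)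
    (hxA : ∀ n, δ ≤ Metric.infDist (x n) A)
    (hsep : ∀ m n, m ≠ n → ε ≤ dist (x m) (x n))
    (T T' : Set ℕ) (i : ℕ) (hiT : i ∈ T) (hiT' : i ∉ T')
    (g : ℕ → X)
    (h1 : bdist A (fun n => if n ∈ T then x n else a0) g < ENNReal.ofReal (min ε δ / 2))
    (h2 : bdist A (fun n => if n ∈ T' then x n else a0) g < ENNReal.ofReal (min ε δ / 2)) :
    False := by
  classical
  set c : ℝ := min ε δ with hc
  obtain ⟨α, hα, β, hβ, e, he⟩ := bdist_lt_iff A _ g _ h1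
  obtain ⟨α', hα', β', hβ', e', he'⟩ := bdist_lt_iff A _ g _ h2
  have hdA : ∀ z ∈ A, c ≤ dist (x i) z := fun z hz =>
    le_trans (min_le_right _ _) (le_trans (hxA i) (Metric.infDist_le_dist_of_mem hz))
  have h1i := he (Sum.inl i)
  rw [edist_lt_ofReal] at h1i
  simp only [Sum.elim_inl, if_pos hiT] at h1i
  cases hm : e (Sum.inl i) with
  | inr k =>
      rw [hm] at h1i
      simp only [Sum.elim_inr] at h1i
      have h1 := hdA (β k) (hβ k)
      have h2 := dist_nonneg (x := x i) (y := β k)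
      linarith
  | inl m =>
      rw [hm] at h1i
      simp only [Sum.elim_inl] at h1i
      have h2m := he' (e'.symm (Sum.inl m))
      rw [e'.apply_symm_apply, edist_lt_ofReal] at h2m
      simp only [Sum.elim_inl] at h2m
      have htri : dist (x i) (Sum.elim (fun n => if n ∈ T' then x n else a0) α'
          (e'.symm (Sum.inl m))) < c := by
        calc dist (x i) _ ≤ dist (x i) (g m) + dist (g m) _ := dist_triangle _ _ _
        _ < c / 2 + c / 2 := by
              rw [dist_comm (g m)]
              exact add_lt_add h1i h2m
        _ = c := by ring
      cases hn : e'.symm (Sum.inl m) with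
      | inl j =>
          rw [hn] at htri
          simp only [Sum.elim_inl] at htri
          by_cases hj : j ∈ T'
          · rw [if_pos hj] at htri
            have hij : i ≠ j := fun h => hiT' (h ▸ hj)
            exact absurd htri (not_lt.2 (le_trans (min_le_left _ _) (hsep i j hij)))
          · rw [if_neg hj] at htri
            exact absurd htri (not_lt.2 (hdA a0 ha0))
      | inr k =>
          rw [hn] at htri
          simp only [Sum.elim_inr] at htri
          exact absurd htri (not_lt.2 (hdA (α' k) (hα' k)))

/-- Each indicator diagram is a diagram. -/
lemma isDiagram_indicator {X : Type*} [MetricSpace X] (A : Set X) (hA : A.Nonempty)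
    (x : ℕ → X) (a0 : X) (ha0 : a0 ∈ A) (D : ℝ)
    (hxD : ∀ n, Metric.infDist (x n) A < D) (T : Set ℕ) :
    IsDiagram A (fun n => if n ∈ T then x n else a0) := by
  classical
  have ha : ∀ n, ∃ a ∈ A, dist (x n) a < D := fun n =>
    (Metric.infDist_lt_iff hA).1 (hxD n)
  choose a haA haD using ha
  refine ⟨fun n => if n ∈ T then a n else a0, fun n => by dsimp; split <;> [exact haA n; exact ha0], ?_⟩
  have hle : bdist A (fun n => if n ∈ T then x n else a0) (fun n => if n ∈ T then a n else a0)
      ≤ ENNReal.ofReal D := by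
    refine iInf_le_of_le (fun _ => a0) (iInf_le_of_le (fun _ => ha0)
      (iInf_le_of_le (fun _ => a0) (iInf_le_of_le (fun _ => ha0)
      (iInf_le_of_le (Equiv.refl _) ?_))))
    refine iSup_le fun n => ?_
    cases n with
    | inl m =>
        simp only [Equiv.refl_apply, Sum.elim_inl]
        by_cases hm : m ∈ T
        · rw [if_pos hm, if_pos hm, edist_dist]
          exact ENNReal.ofReal_le_ofReal (haD m).le
        · rw [if_neg hm, if_neg hm, edist_self]
          exact zero_le
    | inr m =>
        simp only [Equiv.refl_apply, Sum.elim_inr, edist_self]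
        exact zero_le
  exact ne_top_of_le_ne_top ENNReal.ofReal_ne_top hle

/-- If for some `D > δ > 0` the set `B_D(A) \ B_δ(A)` is not totally bounded, then
`D_∞(X, A)` is not separable: it has no countable dense subset. -/
theorem stmt_10 {X : Type*} [MetricSpace X] (A : Set X) (hA : A.Nonempty)
    (hAcl : IsClosed A)
    (htb : ∃ D δ : ℝ, 0 < δ ∧ δ < D ∧
      ¬ TotallyBounded {x : X | δ ≤ Metric.infDist x A ∧ Metric.infDist x A < D}) :
    ¬ ∃ S : Set (ℕ → X), S.Countable ∧ (∀ f ∈ S, IsDiagram A f) ∧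
      ∀ f : ℕ → X, IsDiagram A f → ∀ ε : ℝ≥0∞, 0 < ε → ∃ g ∈ S, bdist A f g < ε := by
  classical
  obtain ⟨D, δ, hδ, hδD, htb⟩ := htb
  rintro ⟨S, hScount, hSdiag, hSdense⟩
  obtain ⟨a0, ha0⟩ := hA
  set s : Set X := {x : X | δ ≤ Metric.infDist x A ∧ Metric.infDist x A < D} with hs
  rw [Metric.totallyBounded_iff] at htb
  push_neg at htb
  obtain ⟨ε, hε, hnet⟩ := htb
  haveI : Std.Symm fun z w : X => ε ≤ dist z w := ⟨fun z w h => by rwa [dist_comm]⟩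
  obtain ⟨x, hxs, hxsep⟩ := exists_seq_of_forall_finset_exists' (fun z => z ∈ s)
    (fun z w => ε ≤ dist z w) (fun t _ => by
      have h := hnet (↑t) t.finite_toSet
      rw [Set.not_subset] at h
      obtain ⟨z, hzs, hz⟩ := h
      refine ⟨z, hzs, fun y hy => ?_⟩
      simp only [Set.mem_iUnion, Metric.mem_ball] at hz
      push_neg at hz
      rw [dist_comm]
      exact hz y hy)
  have hxsep' : ∀ m n, m ≠ n → ε ≤ dist (x m) (x n) := fun m n h => hxsep h
  have hxδ : ∀ n, δ ≤ Metric.infDist (x n) A := fun n => (hxs n).1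
  have hxD : ∀ n, Metric.infDist (x n) A < D := fun n => (hxs n).2
  set c : ℝ := min ε δ with hc
  have hcpos : 0 < c := lt_min hε hδ
  have hc2pos : (0 : ℝ≥0∞) < ENNReal.ofReal (c / 2) := ENNReal.ofReal_pos.2 (by linarith)
  -- the family of diagrams
  set F : Set ℕ → ℕ → X := fun T n => if n ∈ T then x n else a0 with hF
  have hFdiag : ∀ T : Set ℕ, IsDiagram A (F T) := fun T =>
    isDiagram_indicator A ⟨a0, ha0⟩ x a0 ha0 D hxD T
  have hchoice : ∀ T : Set ℕ, ∃ g ∈ S, bdist A (F T) g < ENNReal.ofReal (c / 2) :=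
    fun T => hSdense (F T) (hFdiag T) _ hc2pos
  choose φ hφS hφd using hchoice
  have hφinj : Function.Injective φ := by
    intro T T' hTT'
    by_contra hne
    have hne' : ¬ (T ⊆ T') ∨ ¬ (T' ⊆ T) := by
      by_contra h
      push_neg at h
      exact hne (Set.Subset.antisymm h.1 h.2)
    obtain h | h := hne'
    · obtain ⟨i, h1, h2⟩ := Set.not_subset.1 h
      exact key_sep A x a0 ha0 δ ε hxδ hxsep' T T' i h1 h2 (φ T)
        (hφd T) (hTT' ▸ hφd T')
    · obtain ⟨i, h1, h2⟩ := Set.not_subset.1 h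
      exact key_sep A x a0 ha0 δ ε hxδ hxsep' T' T i h1 h2 (φ T')
        (hφd T') (hTT' ▸ hφd T)
  -- cardinality contradiction
  obtain ⟨ι, hι⟩ := Set.countable_iff_exists_injective.1 hScount
  have : Function.Injective fun T : Set ℕ => ι ⟨φ T, hφS T⟩ := fun T T' h =>
    hφinj (Subtype.ext_iff.1 (hι h))
  exact Function.cantor_injective _ this
end

section
/- The space D_∞(ℝ²_{≥0}, Δ) of usual persistence diagrams with the bottleneck distance is not separable, where ℝ²_{≥0} = {(x,y) ∈ ℝ² : 0 ≤ x ≤ y} and Δ = {(x,y) : x = y}. -/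
open scoped ENNReal
open Filter Metric Set

abbrev Xs := {p : ℝ × ℝ // 0 ≤ p.1 ∧ p.1 ≤ p.2}

def Dg : Set Xs := {p : Xs | p.val.1 = p.val.2}

noncomputable section
open Classical in
noncomputable def Fd (T : Set ℕ) (n : ℕ) : Xs :=
  ⟨(4 * n, 4 * n + if n ∈ T then 2 else 1), by
    constructor <;> dsimp only <;> [positivity; split <;> linarith]⟩

noncomputable def Gd (n : ℕ) : Xs := ⟨(4 * n + 1, 4 * n + 1), ⟨by positivity, le_refl _⟩⟩

lemma aux_max (a c t : ℝ) (hc : 1 ≤ c) : 1/2 ≤ max |a - t| |a + c - t| := by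
  rcases le_or_gt t (a + c/2) with h | h
  · refine le_trans ?_ (le_max_right _ _)
    have := le_abs_self (a + c - t)
    linarith
  · refine le_trans ?_ (le_max_left _ _)
    have := neg_abs_le (a - t)
    linarith

lemma diag_far (T : Set ℕ) (n : ℕ) (q : Xs) (hq : q ∈ Dg) :
    (1/2 : ℝ) ≤ dist (Fd T n) q := by
  have hq' : q.val.2 = q.val.1 := hq.symm
  rw [Subtype.dist_eq, Prod.dist_eq, Real.dist_eq, Real.dist_eq, hq']
  exact aux_max (4 * n) _ q.val.1 (by split <;> norm_num)

lemma Fd_close {T T' : Set ℕ} {n l : ℕ}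
    (h : dist (Fd T n) (Fd T' l) < 1/2) (hn : n ∈ T) : n ∈ T' := by
  rw [Subtype.dist_eq, Prod.dist_eq, max_lt_iff] at h
  obtain ⟨h1, h2⟩ := h
  have hnl : n = l := by
    have h1' : |4*(n:ℝ) - 4*(l:ℝ)| < 1/2 := by
      simpa [Fd, Real.dist_eq] using h1
    rcases lt_trichotomy n l with hlt | heq | hgt
    · exfalso
      have hc : (n:ℝ) + 1 ≤ (l:ℝ) := by exact_mod_cast hlt
      have := neg_abs_le (4*(n:ℝ) - 4*(l:ℝ))
      linarith
    · exact heq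
    · exfalso
      have hc : (l:ℝ) + 1 ≤ (n:ℝ) := by exact_mod_cast hgt
      have := le_abs_self (4*(n:ℝ) - 4*(l:ℝ))
      linarith
  subst hnl
  by_contra hn'
  have h2' : |(4*(n:ℝ) + 2) - (4*(n:ℝ) + 1)| < 1/2 := by
    simpa [Fd, Real.dist_eq, hn, hn'] using h2
  rw [show (4*(n:ℝ)+2) - (4*(n:ℝ)+1) = 1 by ring] at h2'
  norm_num at h2'

lemma Fd_isDiagram (T : Set ℕ) : IsDiagram Dg (Fd T) := by
  refine ⟨Gd, fun n => rfl, ?_⟩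
  have hle : bdist Dg (Fd T) Gd ≤ ENNReal.ofReal 1 := by
    rw [bdist]
    refine le_trans (iInf_le _ Gd) ?_
    refine le_trans (iInf_le _ (fun n => rfl)) ?_
    refine le_trans (iInf_le _ Gd) ?_
    refine le_trans (iInf_le _ (fun n => rfl)) ?_
    refine le_trans (iInf_le _ (Equiv.refl _)) ?_
    refine iSup_le ?_
    rintro (k | k)
    · simp only [Sum.elim_inl, Equiv.refl_apply]
      rw [edist_dist]
      refine ENNReal.ofReal_le_ofReal ?_
      rw [Subtype.dist_eq, Prod.dist_eq, max_le_iff, Real.dist_eq, Real.dist_eq]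
      constructor
      · rw [show (Fd T k).val.1 - (Gd k).val.1 = -1 by simp only [Fd, Gd]; ring]
        norm_num
      · simp only [Fd, Gd]
        split <;> [rw [show 4*(k:ℝ) + 2 - (4*k+1) = 1 by ring]; rw [show 4*(k:ℝ) + 1 - (4*k+1) = 0 by ring]] <;> norm_num
    · simp
  exact ne_top_of_le_ne_top ENNReal.ofReal_ne_top hle

lemma key {T T' : Set ℕ} {g : ℕ → Xs}
    (h : bdist Dg (Fd T) g < ENNReal.ofReal (1/4))
    (h' : bdist Dg (Fd T') g < ENNReal.ofReal (1/4)) : T ⊆ T' := by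
  rw [bdist] at h h'
  simp only [iInf_lt_iff] at h h'
  obtain ⟨α, hα, β, hβ, e, he⟩ := h
  obtain ⟨α', hα', β', hβ', e', he'⟩ := h'
  intro n hn
  have h1 : dist (Fd T n) (Sum.elim g β (e (Sum.inl n))) < 1/4 := by
    have := lt_of_le_of_lt (le_iSup _ (Sum.inl n)) he
    rw [Sum.elim_inl] at this
    exact edist_lt_ofReal.mp this
  obtain ⟨m, hm⟩ : ∃ m, e (Sum.inl n) = Sum.inl m := by
    cases hem : e (Sum.inl n) with
    | inl m => exact ⟨m, rfl⟩
    | inr m =>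
      exfalso
      rw [hem, Sum.elim_inr] at h1
      have := diag_far T n (β m) (hβ m)
      linarith
  rw [hm, Sum.elim_inl] at h1
  have h2 : dist (Sum.elim (Fd T') α' (e'.symm (Sum.inl m))) (g m) < 1/4 := by
    have := lt_of_le_of_lt (le_iSup _ (e'.symm (Sum.inl m))) he'
    rw [Equiv.apply_symm_apply, Sum.elim_inl] at this
    exact edist_lt_ofReal.mp this
  cases hk : e'.symm (Sum.inl m) with
  | inr l =>
    exfalso
    rw [hk, Sum.elim_inr] at h2
    have ht := dist_triangle (Fd T n) (g m) (α' l)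
    have hc := dist_comm (α' l) (g m)
    have := diag_far T n (α' l) (hα' l)
    linarith
  | inl l =>
    rw [hk, Sum.elim_inl] at h2
    have htr : dist (Fd T n) (Fd T' l) < 1/2 := by
      have ht := dist_triangle (Fd T n) (g m) (Fd T' l)
      have hc := dist_comm (Fd T' l) (g m)
      linarith
    exact Fd_close htr hn


end

/-- The usual space of persistence diagrams `D_∞(ℝ²_{≥0}, Δ)` with the bottleneck distance
is not separable. -/
theorem stmt_11 :
    ¬ ∃ S : Set (ℕ → {p : ℝ × ℝ // 0 ≤ p.1 ∧ p.1 ≤ p.2}),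
      S.Countable ∧
      (∀ f ∈ S, IsDiagram {p : {p : ℝ × ℝ // 0 ≤ p.1 ∧ p.1 ≤ p.2} | p.val.1 = p.val.2} f) ∧
      ∀ f : ℕ → {p : ℝ × ℝ // 0 ≤ p.1 ∧ p.1 ≤ p.2},
        IsDiagram {p : {p : ℝ × ℝ // 0 ≤ p.1 ∧ p.1 ≤ p.2} | p.val.1 = p.val.2} f →
        ∀ ε : ℝ≥0∞, 0 < ε → ∃ g ∈ S,
          bdist {p : {p : ℝ × ℝ // 0 ≤ p.1 ∧ p.1 ≤ p.2} | p.val.1 = p.val.2} f g < ε := by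
  rintro ⟨S, hSc, -, hdense⟩
  have hpos : (0:ℝ≥0∞) < ENNReal.ofReal (1/4) := by
    rw [ENNReal.ofReal_pos]; norm_num
  choose g hgS hgd using fun T : Set ℕ =>
    hdense (Fd T) (Fd_isDiagram T) (ENNReal.ofReal (1/4)) hpos
  have hinj : Function.Injective g := by
    intro T T' he
    have h1 : bdist Dg (Fd T') (g T) < ENNReal.ofReal (1/4) := by
      rw [he]; exact hgd T'
    have h2 : bdist Dg (Fd T) (g T') < ENNReal.ofReal (1/4) := by
      rw [← he]; exact hgd T
    exact subset_antisymm (key (hgd T) h1) (key h1 (hgd T))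
  have hr : (Set.range g).Countable := hSc.mono (Set.range_subset_iff.mpr hgS)
  have huniv : (Set.univ : Set (Set ℕ)).Countable := by
    have := hr.preimage hinj
    simpa using this
  have : Countable (Set ℕ) := Set.countable_univ_iff.mp huniv
  obtain ⟨f⟩ := (countable_iff_nonempty_embedding.mp this)
  exact Function.cantor_injective f f.injective
end

section
/- Let X be a proper metric space, A ⊆ X nonempty closed, and σ, τ ∈ D_∞(X,A). Then there exist diagrams σ', τ' ∈ D_∞(X,A) with d_∞(σ,σ') = d_∞(τ,τ') = 0 and a bijection γ : σ' → τ' (between representatives) such that d_∞(σ,τ) = sup{d(x,γ(x)) : x ∈ σ'}. -/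
open scoped ENNReal
open Filter Metric Set
open scoped NNReal

section Support

variable {X : Type*} [MetricSpace X] {A : Set X}

private lemma bdist_le_master (f g : ℕ → X) {ι κ : Type*} (eι : (ℕ ⊕ ℕ) ≃ ι) (eκ : (ℕ ⊕ ℕ) ≃ κ)
    (F : ι → X) (G : κ → X)
    (hF : ∀ n, F (eι (Sum.inl n)) = f n) (hFA : ∀ m, F (eι (Sum.inr m)) ∈ A)
    (hG : ∀ n, G (eκ (Sum.inl n)) = g n) (hGA : ∀ m, G (eκ (Sum.inr m)) ∈ A)
    (E : ι ≃ κ) {c : ℝ≥0∞} (hE : ∀ i, edist (F i) (G (E i)) ≤ c) :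
    bdist A f g ≤ c := by
  have hFall : ∀ n : ℕ ⊕ ℕ, Sum.elim f (fun m => F (eι (Sum.inr m))) n = F (eι n) := by
    rintro (n | m) <;> simp [hF]
  have hGall : ∀ x : κ, Sum.elim g (fun m => G (eκ (Sum.inr m))) (eκ.symm x) = G x := by
    intro x
    rcases h : eκ.symm x with n | m
    · have hx : x = eκ (Sum.inl n) := by rw [← h, Equiv.apply_symm_apply]
      simp [hx, hG, Equiv.symm_apply_apply]
    · have hx : x = eκ (Sum.inr m) := by rw [← h, Equiv.apply_symm_apply]
      simp [hx, Equiv.symm_apply_apply]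
  unfold bdist
  refine iInf_le_of_le (fun m => F (eι (Sum.inr m))) ?_
  refine iInf_le_of_le hFA ?_
  refine iInf_le_of_le (fun m => G (eκ (Sum.inr m))) ?_
  refine iInf_le_of_le hGA ?_
  refine iInf_le_of_le (eι.trans (E.trans eκ.symm)) ?_
  refine iSup_le fun n => ?_
  have h1 : (eι.trans (E.trans eκ.symm)) n = eκ.symm (E (eι n)) := rfl
  rw [h1, hFall, hGall]
  exact hE _

private lemma exists_matching_s13 {f g : ℕ → X} {c : ℝ≥0∞} (h : bdist A f g < c) :
    ∃ (α β : ℕ → X) (e : (ℕ ⊕ ℕ) ≃ (ℕ ⊕ ℕ)), (∀ n, α n ∈ A) ∧ (∀ n, β n ∈ A) ∧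
      ∀ n, edist (Sum.elim f α n) (Sum.elim g β (e n)) ≤ c := by
  unfold bdist at h
  simp only [iInf_lt_iff] at h
  obtain ⟨α, hα, β, hβ, e, he⟩ := h
  exact ⟨α, β, e, hα, hβ, fun n => (le_iSup _ n).trans he.le⟩

private lemma bdist_zero_of_mem {f g : ℕ → X} (hf : ∀ n, f n ∈ A) (hg : ∀ n, g n ∈ A) :
    bdist A f g = 0 := by
  refine le_antisymm ?_ (zero_le)
  refine bdist_le_master f g (Equiv.refl _) (Equiv.refl _) (Sum.elim f g) (Sum.elim g f)
    (fun n => rfl) (fun m => hg m) (fun n => rfl) (fun m => hf m) (Equiv.sumComm ℕ ℕ) ?_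
  rintro (n | m) <;> simp

private lemma bdist_self (f : ℕ → X) {a0 : X} (ha0 : a0 ∈ A) : bdist A f f = 0 := by
  refine le_antisymm ?_ (zero_le)
  refine bdist_le_master f f (Equiv.refl _) (Equiv.refl _) (Sum.elim f fun _ => a0)
    (Sum.elim f fun _ => a0) (fun n => rfl) (fun _ => ha0) (fun n => rfl) (fun _ => ha0)
    (Equiv.refl _) ?_
  rintro (n | m) <;> simp

private lemma bdist_symm (f g : ℕ → X) : bdist A g f = bdist A f g := by
  have key : ∀ (f g : ℕ → X), bdist A g f ≤ bdist A f g := by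
    intro f g
    conv_rhs => unfold bdist
    refine le_iInf fun α => le_iInf fun hα => le_iInf fun β => le_iInf fun hβ =>
      le_iInf fun e => ?_
    refine bdist_le_master g f (Equiv.refl _) (Equiv.refl _) (Sum.elim g β) (Sum.elim f α)
      (fun n => rfl) hβ (fun n => rfl) hα e.symm fun i => ?_
    rw [edist_comm]
    have h2 : edist (Sum.elim f α (e.symm i)) (Sum.elim g β i)
        = edist (Sum.elim f α (e.symm i)) (Sum.elim g β (e (e.symm i))) := by
      rw [Equiv.apply_symm_apply]
    rw [h2]
    exact le_iSup (fun n => edist (Sum.elim f α n) (Sum.elim g β (e n))) (e.symm i)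
  exact le_antisymm (key f g) (key g f)

private lemma bdist_triangle (f g h : ℕ → X) :
    bdist A f h ≤ bdist A f g + bdist A g h := by
  by_cases h1 : bdist A f g = ⊤
  · rw [h1, top_add]; exact le_top
  by_cases h2 : bdist A g h = ⊤
  · rw [h2, add_top]; exact le_top
  refine ENNReal.le_of_forall_pos_le_add fun ε hε hlt => ?_
  have hε2 : ((ε : ℝ≥0∞) / 2) ≠ 0 := by
    simp [ENNReal.div_eq_zero_iff, hε.ne']
  obtain ⟨α₁, β₁, e₁, hα₁, hβ₁, he₁⟩ := exists_matching_s13 (A := A) (ENNReal.lt_add_right h1 hε2)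
  obtain ⟨α₂, β₂, e₂, hα₂, hβ₂, he₂⟩ := exists_matching_s13 (A := A) (ENNReal.lt_add_right h2 hε2)
  set c₁ := bdist A f g + (ε : ℝ≥0∞) / 2 with hc₁
  set c₂ := bdist A g h + (ε : ℝ≥0∞) / 2 with hc₂
  have hfinal : c₁ + c₂ = bdist A f g + bdist A g h + ε := by
    rw [hc₁, hc₂, add_add_add_comm, ENNReal.add_halves]
  rw [← hfinal]
  set ν : ℕ ≃ ℕ ⊕ ℕ := (Denumerable.eqv (ℕ ⊕ ℕ)).symm with hν
  set eι : (ℕ ⊕ ℕ) ≃ ((ℕ ⊕ ℕ) ⊕ ℕ) :=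
    (Equiv.sumCongr (Equiv.refl ℕ) ν).trans (Equiv.sumAssoc ℕ ℕ ℕ).symm with heι
  set sw : ((ℕ ⊕ ℕ) ⊕ ℕ) ≃ ((ℕ ⊕ ℕ) ⊕ ℕ) :=
    (Equiv.sumAssoc ℕ ℕ ℕ).trans ((Equiv.sumCongr (Equiv.refl ℕ) (Equiv.sumComm ℕ ℕ)).trans
      (Equiv.sumAssoc ℕ ℕ ℕ).symm) with hsw
  set M : ((ℕ ⊕ ℕ) ⊕ ℕ) → X := Sum.elim (Sum.elim g β₁) α₂ with hM
  set M' : ((ℕ ⊕ ℕ) ⊕ ℕ) → X := Sum.elim (Sum.elim g α₂) β₁ with hM'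
  have hswM : ∀ j, M' (sw j) = M j := by
    rintro ((n | a) | b) <;> simp [hsw, hM, hM']
  have hstep1 : ∀ i, edist (Sum.elim (Sum.elim f α₁) α₂ i)
      (M ((Equiv.sumCongr e₁ (Equiv.refl ℕ)) i)) ≤ c₁ := by
    rintro (p | b)
    · simpa [hM] using he₁ p
    · simp [hM]
  have hstep2 : ∀ j, edist (M' j)
      (Sum.elim (Sum.elim h β₂) β₁ ((Equiv.sumCongr e₂ (Equiv.refl ℕ)) j)) ≤ c₂ := by
    rintro (p | b)
    · simpa [hM'] using he₂ p
    · simp [hM']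
  refine bdist_le_master f h eι eι
    (Sum.elim (Sum.elim f α₁) α₂) (Sum.elim (Sum.elim h β₂) β₁)
    ?_ ?_ ?_ ?_
    ((Equiv.sumCongr e₁ (Equiv.refl ℕ)).trans (sw.trans (Equiv.sumCongr e₂ (Equiv.refl ℕ))))
    (c := c₁ + c₂) ?_
  · intro n; simp [heι]
  · intro m
    rcases hm : ν m with a | b
    · simp [heι, hm, hα₁ a]
    · simp [heι, hm, hα₂ b]
  · intro n; simp [heι]
  · intro m
    rcases hm : ν m with a | b
    · simp [heι, hm, hβ₂ a]
    · simp [heι, hm, hβ₁ b]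
  · intro i
    have hEi : ((Equiv.sumCongr e₁ (Equiv.refl ℕ)).trans
        (sw.trans (Equiv.sumCongr e₂ (Equiv.refl ℕ)))) i
        = (Equiv.sumCongr e₂ (Equiv.refl ℕ)) (sw ((Equiv.sumCongr e₁ (Equiv.refl ℕ)) i)) := rfl
    rw [hEi]
    refine le_trans (edist_triangle _ (M ((Equiv.sumCongr e₁ (Equiv.refl ℕ)) i)) _) ?_
    refine add_le_add (hstep1 i) ?_
    rw [← hswM]
    exact hstep2 _


section Support2
variable {X : Type*} [MetricSpace X] {A : Set X}

private lemma exists_cluster {Y : Type*} [MetricSpace Y] [ProperSpace Y] (c : Y) (R : ℝ)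
    (v : ℕ → Y) (hv : ∀ k, dist (v k) c ≤ R) (U : Ultrafilter ℕ) :
    ∃ z : Y, ∀ ε : ℝ, 0 < ε → {k | dist (v k) z < ε} ∈ U := by
  have hK : IsCompact (closedBall c R) := isCompact_closedBall c R
  have hle : (U.map v : Filter Y) ≤ 𝓟 (closedBall c R) := by
    refine le_principal_iff.2 ?_
    refine mem_map.2 ?_
    filter_upwards [univ_mem] using fun k _ => mem_closedBall.2 (hv k)
  obtain ⟨z, hz, hlim⟩ := hK.ultrafilter_le_nhds (U.map v) hle
  refine ⟨z, fun ε hε => ?_⟩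
  have h1 : Metric.ball z ε ∈ (U.map v : Filter Y) := hlim (Metric.ball_mem_nhds z hε)
  have h2 : v ⁻¹' (Metric.ball z ε) ∈ U := mem_map.1 h1
  refine mem_of_superset h2 ?_
  intro k hk
  simpa [Metric.mem_ball] using hk

private lemma exists_chains (C : ℕ → Set ℕ) (rel : ℕ → Prop) (hC : ∀ i, rel i → (C i).Infinite) :
    ∃ θ : ℕ → ℕ → ℕ, (∀ i m, rel i → θ i m ∈ C i) ∧
      (∀ i m i' m', rel i → rel i' → θ i m = θ i' m' → i = i' ∧ m = m') := by
  classical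
  set pickF : List ℕ → ℕ → ℕ := fun L k =>
    if h : rel (Nat.unpair k).1 then (((hC _ h).diff (L.finite_toSet)).nonempty).some else 0
    with hpickF
  set Q : ℕ → List ℕ := fun n => Nat.rec [] (fun k L => pickF L k :: L) n with hQ
  have hQsucc : ∀ n, Q (n + 1) = pickF (Q n) n :: Q n := fun n => rfl
  have hpick : ∀ L k, rel (Nat.unpair k).1 →
      pickF L k ∈ C (Nat.unpair k).1 \ {x | x ∈ L} := by
    intro L k h
    have h1 : pickF L k = (((hC _ h).diff (L.finite_toSet)).nonempty).some := by
      simp only [hpickF, dif_pos h]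
    rw [h1]
    exact Set.Nonempty.some_mem _
  have hmem : ∀ n m, m < n → pickF (Q m) m ∈ Q n := by
    intro n
    induction n with
    | zero => intro m hm; exact absurd hm (Nat.not_lt_zero m)
    | succ n ih =>
      intro m hm
      rw [hQsucc]
      rcases Nat.lt_succ_iff_lt_or_eq.1 hm with h | h
      · exact List.mem_cons_of_mem _ (ih m h)
      · subst h; exact List.mem_cons_self
  refine ⟨fun i m => pickF (Q (Nat.pair i m)) (Nat.pair i m), ?_, ?_⟩
  · intro i m h
    have h1 := hpick (Q (Nat.pair i m)) (Nat.pair i m) (by rwa [Nat.unpair_pair])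
    rw [Nat.unpair_pair] at h1
    exact h1.1
  · intro i m i' m' h h' heq
    simp only [] at heq
    rcases lt_trichotomy (Nat.pair i m) (Nat.pair i' m') with hlt | heqp | hgt
    · exfalso
      have hm1 : pickF (Q (Nat.pair i m)) (Nat.pair i m) ∈ Q (Nat.pair i' m') := hmem _ _ hlt
      have hm2 := (hpick (Q (Nat.pair i' m')) (Nat.pair i' m') (by rwa [Nat.unpair_pair])).2
      rw [show pickF (Q (Nat.pair i m)) (Nat.pair i m) = pickF (Q (Nat.pair i' m')) (Nat.pair i' m') from heq] at hm1
      exact hm2 hm1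
    · exact Nat.pair_eq_pair.1 heqp
    · exfalso
      have hm1 : pickF (Q (Nat.pair i' m')) (Nat.pair i' m') ∈ Q (Nat.pair i m) := hmem _ _ hgt
      have hm2 := (hpick (Q (Nat.pair i m)) (Nat.pair i m) (by rwa [Nat.unpair_pair])).2
      rw [show pickF (Q (Nat.pair i' m')) (Nat.pair i' m') = pickF (Q (Nat.pair i m)) (Nat.pair i m) from heq.symm] at hm1
      exact hm2 hm1

private lemma absorb {a0 : X} (ha0 : a0 ∈ A) (g u : ℕ → X) (ν : ℕ ≃ ℕ ⊕ ℕ)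
    (ε : ℝ) (hε : 0 < ε)
    (hdich : ∀ i, (∃ a ∈ A, dist (u i) a ≤ ε) ∨ {j | dist (g j) (u i) ≤ ε}.Infinite) :
    bdist A g (fun n => Sum.elim g u (ν n)) ≤ ENNReal.ofReal (2 * ε) := by
  classical
  set near : ℕ → Prop := fun i => ∃ a ∈ A, dist (u i) a ≤ ε with hneardef
  obtain ⟨θ, hθC, hθinj⟩ := exists_chains (fun i => {j | dist (g j) (u i) ≤ ε})
    (fun i => ¬ near i) (fun i h => (hdich i).resolve_left h)
  have hbex : ∀ i, ∃ b, b ∈ A ∧ (near i → dist (u i) b ≤ ε) ∧ (¬ near i → b = a0) := by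
    intro i
    by_cases h : near i
    · obtain ⟨a, ha, hd⟩ := h
      exact ⟨a, ha, fun _ => hd, fun h' => absurd (⟨a, ha, hd⟩ : near i) h'⟩
    · exact ⟨a0, ha0, fun hh => absurd hh h, fun _ => rfl⟩
  choose b hbA hbd hba0 using hbex
  set R : Set ℕ := {j | ∃ i m, ¬ near i ∧ θ i m = j} with hRdef
  have hdecex : ∀ j, ∃ p : ℕ × ℕ, j ∈ R → (¬ near p.1 ∧ θ p.1 p.2 = j) := by
    intro j
    by_cases h : j ∈ R
    · obtain ⟨i, m, hi, hm⟩ := h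
      exact ⟨(i, m), fun _ => ⟨hi, hm⟩⟩
    · exact ⟨(0, 0), fun hh => absurd hh h⟩
  choose dec hdec using hdecex
  have hmemR : ∀ i m, ¬ near i → θ i m ∈ R := fun i m h => ⟨i, m, h, rfl⟩
  have hdecθ : ∀ i m, ¬ near i → dec (θ i m) = (i, m) := by
    intro i m h
    obtain ⟨h1, h2⟩ := hdec (θ i m) (hmemR i m h)
    obtain ⟨hi, hm⟩ := hθinj _ _ _ _ h1 h h2
    exact Prod.ext_iff.2 ⟨hi, hm⟩
  haveI : Infinite (ℕ ⊕ {i : ℕ // near i}) :=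
    Infinite.of_injective (Sum.inl : ℕ → ℕ ⊕ {i : ℕ // near i}) Sum.inl_injective
  haveI : Denumerable (ℕ ⊕ {i : ℕ // near i}) := Denumerable.ofEncodableOfInfinite _
  set S := {i : ℕ // near i} with hS
  set e₂ : ℕ ≃ ℕ ⊕ S := (Denumerable.eqv (ℕ ⊕ S)).symm with he₂
  set Fab : ℕ ⊕ (ℕ ⊕ S) → X := Sum.elim g (Sum.elim b fun _ => a0) with hFab
  set Gab : (ℕ ⊕ ℕ) ⊕ ℕ → X := Sum.elim (Sum.elim g u) (fun _ => a0) with hGab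
  set T : (ℕ ⊕ (ℕ ⊕ S)) → ((ℕ ⊕ ℕ) ⊕ ℕ) := Sum.elim
      (fun j => if j ∈ R then (if (dec j).2 = 0 then Sum.inl (Sum.inr (dec j).1)
        else Sum.inl (Sum.inl (θ (dec j).1 ((dec j).2 - 1)))) else Sum.inl (Sum.inl j))
      (Sum.elim (fun i => if near i then Sum.inl (Sum.inr i) else Sum.inr i)
        (fun s => Sum.inr s.1)) with hT
  set T' : ((ℕ ⊕ ℕ) ⊕ ℕ) → (ℕ ⊕ (ℕ ⊕ S)) := Sum.elim
      (Sum.elim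
        (fun j => if j ∈ R then Sum.inl (θ (dec j).1 ((dec j).2 + 1)) else Sum.inl j)
        (fun i => if h : near i then Sum.inr (Sum.inl i) else Sum.inl (θ i 0)))
      (fun i => if h : near i then Sum.inr (Sum.inr ⟨i, h⟩) else Sum.inr (Sum.inl i)) with hT'
  have hTT' : ∀ x, T' (T x) = x := by
    rintro (j | (i | s))
    · by_cases hR : j ∈ R
      · obtain ⟨hnear, hθj⟩ := hdec j hR
        rcases hm : (dec j).2 with _ | m
        · have hj : θ (dec j).1 0 = j := by rw [← hm]; exact hθj
          have hTx : T (Sum.inl j) = Sum.inl (Sum.inr (dec j).1) := by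
            simp [hT, hR, hm]
          rw [hTx]
          simp [hT', hnear, hj]
        · have hTx : T (Sum.inl j) = Sum.inl (Sum.inl (θ (dec j).1 m)) := by
            simp [hT, hR, hm]
          rw [hTx]
          have hmem2 : θ (dec j).1 m ∈ R := hmemR _ _ hnear
          have hd2 : dec (θ (dec j).1 m) = ((dec j).1, m) := hdecθ _ _ hnear
          simp only [hT', Sum.elim_inl, if_pos hmem2, hd2]
          show Sum.inl (θ (dec j).1 (m + 1)) = (Sum.inl j : ℕ ⊕ (ℕ ⊕ S))
          rw [← hm, hθj]
      · simp [hT, hT', hR]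
    · by_cases h : near i
      · simp [hT, hT', h]
      · simp [hT, hT', h]
    · simp [hT, hT', s.2]
  have hT'T : ∀ y, T (T' y) = y := by
    rintro ((j | i) | i)
    · by_cases hR : j ∈ R
      · obtain ⟨hnear, hθj⟩ := hdec j hR
        have h1 : dec (θ (dec j).1 ((dec j).2 + 1)) = ((dec j).1, (dec j).2 + 1) :=
          hdecθ _ _ hnear
        have hT'y : T' (Sum.inl (Sum.inl j)) = Sum.inl (θ (dec j).1 ((dec j).2 + 1)) := by
          simp [hT', hR]
        rw [hT'y]
        simp only [hT, Sum.elim_inl, if_pos (hmemR _ _ hnear), h1]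
        simp [hθj]
      · simp [hT, hT', hR]
    · by_cases h : near i
      · simp [hT, hT', h]
      · have hT'y : T' (Sum.inl (Sum.inr i)) = Sum.inl (θ i 0) := by simp [hT', h]
        rw [hT'y]
        simp [hT, hmemR i 0 h, hdecθ i 0 h]
    · by_cases h : near i <;> simp [hT, hT', h]
  have h2ε : (0 : ℝ) ≤ 2 * ε := by linarith
  have hcost : ∀ x, edist (Fab x) (Gab (T x)) ≤ ENNReal.ofReal (2 * ε) := by
    rintro (j | (i | s))
    · by_cases hR : j ∈ R
      · obtain ⟨hnear, hθj⟩ := hdec j hR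
        rcases hm : (dec j).2 with _ | m
        · have hj : θ (dec j).1 0 = j := by rw [← hm]; exact hθj
          have hdist : dist (g j) (u (dec j).1) ≤ ε := by
            have h3 := hθC (dec j).1 0 hnear
            rw [hj] at h3
            exact h3
          have hTx : T (Sum.inl j) = Sum.inl (Sum.inr (dec j).1) := by simp [hT, hR, hm]
          rw [hTx]
          simp only [hFab, hGab, Sum.elim_inl, Sum.elim_inr]
          rw [edist_le_ofReal h2ε]
          linarith
        · have hj : θ (dec j).1 (m + 1) = j := by rw [← hm]; exact hθj
          have hd1 : dist (g j) (u (dec j).1) ≤ ε := by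
            have h3 := hθC (dec j).1 (m + 1) hnear
            rw [hj] at h3
            exact h3
          have hd2 : dist (g (θ (dec j).1 m)) (u (dec j).1) ≤ ε := hθC (dec j).1 m hnear
          have hTx : T (Sum.inl j) = Sum.inl (Sum.inl (θ (dec j).1 m)) := by
            simp [hT, hR, hm]
          rw [hTx]
          simp only [hFab, hGab, Sum.elim_inl]
          rw [edist_le_ofReal h2ε]
          have := dist_triangle (g j) (u (dec j).1) (g (θ (dec j).1 m))
          rw [dist_comm (u (dec j).1) (g (θ (dec j).1 m))] at this
          linarith
      · have hTx : T (Sum.inl j) = Sum.inl (Sum.inl j) := by simp [hT, hR]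
        rw [hTx]
        simp [hFab, hGab]
    · by_cases h : near i
      · have hTx : T (Sum.inr (Sum.inl i)) = Sum.inl (Sum.inr i) := by simp [hT, h]
        rw [hTx]
        simp only [hFab, hGab, Sum.elim_inl, Sum.elim_inr]
        rw [edist_le_ofReal h2ε, dist_comm]
        have := hbd i h
        linarith
      · have hTx : T (Sum.inr (Sum.inl i)) = Sum.inr i := by simp [hT, h]
        rw [hTx]
        simp [hFab, hGab, hba0 i h]
    · have hTx : T (Sum.inr (Sum.inr s)) = Sum.inr s.1 := by simp [hT]
      rw [hTx]
      simp [hFab, hGab]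
  refine bdist_le_master g (fun n => Sum.elim g u (ν n))
    (Equiv.sumCongr (Equiv.refl ℕ) e₂) (Equiv.sumCongr ν (Equiv.refl ℕ))
    Fab Gab ?_ ?_ ?_ ?_ ⟨T, T', hTT', hT'T⟩ hcost
  · intro n; simp [hFab]
  · intro m
    rcases hm : e₂ m with i | s
    · simp [hFab, hm, hbA i]
    · simp [hFab, hm, ha0]
  · intro n; simp [hGab]
  · intro m; simp [hGab, ha0]

private lemma bdist_zero_absorb {a0 : X} (ha0 : a0 ∈ A) (g u : ℕ → X) (ν : ℕ ≃ ℕ ⊕ ℕ)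
    (hdich : ∀ ε : ℝ, 0 < ε → ∀ i,
      (∃ a ∈ A, dist (u i) a ≤ ε) ∨ {j | dist (g j) (u i) ≤ ε}.Infinite) :
    bdist A g (fun n => Sum.elim g u (ν n)) = 0 := by
  refine le_antisymm ?_ (zero_le)
  refine ENNReal.le_of_forall_pos_le_add fun ε hε _ => ?_
  rw [zero_add]
  have hε2 : 0 < (ε : ℝ) / 2 := by positivity
  refine le_trans (absorb ha0 g u ν ((ε : ℝ) / 2) hε2 (hdich _ hε2)) ?_
  have h1 : (2 : ℝ) * ((ε : ℝ) / 2) = (ε : ℝ) := by ring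
  rw [h1, ENNReal.ofReal_coe_nnreal]

end Support2

end Support

/-- If `X` is proper, then for any diagrams `σ, τ ∈ D_∞(X, A)` there are diagrams
`σ', τ'` at bottleneck distance `0` from `σ, τ` respectively and a bijection between
(representatives of) `σ'` and `τ'` realizing the bottleneck distance `d_∞(σ, τ)`. -/
theorem stmt_13 {X : Type*} [MetricSpace X] [ProperSpace X] (A : Set X)
    (hA : A.Nonempty) (hAcl : IsClosed A)
    (f g : ℕ → X) (hf : IsDiagram A f) (hg : IsDiagram A g) :
    ∃ f' g' : ℕ → X, IsDiagram A f' ∧ IsDiagram A g' ∧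
      bdist A f f' = 0 ∧ bdist A g g' = 0 ∧
      ∃ e : ℕ ≃ ℕ, bdist A f g = ⨆ n, edist (f' n) (g' (e n)) := by
  classical
  obtain ⟨a0, ha0⟩ := hA
  by_cases htop : bdist A f g = ⊤
  · refine ⟨f, g, hf, hg, bdist_self f ha0, bdist_self g ha0, Equiv.refl ℕ, ?_⟩
    have hle : bdist A f g ≤ ⨆ n : ℕ, edist (f n) (g n) := by
      refine bdist_le_master f g (Equiv.refl _) (Equiv.refl _)
        (Sum.elim f fun _ => a0) (Sum.elim g fun _ => a0)
        (fun n => rfl) (fun _ => ha0) (fun n => rfl) (fun _ => ha0) (Equiv.refl _) ?_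
      rintro (n | m)
      · simpa using le_iSup (fun n => edist (f n) (g n)) n
      · simp
    rw [htop] at hle
    simp only [Equiv.refl_apply]
    exact htop.trans (top_le_iff.1 hle).symm
  have hδ : ∀ k : ℕ, bdist A f g < bdist A f g + ((k + 1 : ℕ) : ℝ≥0∞)⁻¹ := by
    intro k
    refine ENNReal.lt_add_right htop ?_
    exact ENNReal.inv_ne_zero.2 (ENNReal.natCast_ne_top (k + 1))
  choose α β e hαβ using fun k => exists_matching_s13 (hδ k)
  have hα : ∀ k n, α k n ∈ A := fun k => (hαβ k).1
  have hβ : ∀ k n, β k n ∈ A := fun k => (hαβ k).2.1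
  have hmatch : ∀ k n, edist (Sum.elim f (α k) n) (Sum.elim g (β k) (e k n))
      ≤ bdist A f g + ((k + 1 : ℕ) : ℝ≥0∞)⁻¹ := fun k => (hαβ k).2.2
  set U : Ultrafilter ℕ := Filter.hyperfilter ℕ with hU
  have hUinf : ∀ s ∈ U, s.Infinite := by
    intro s hs
    by_contra hcon
    rw [Set.not_infinite] at hcon
    exact Filter.notMem_hyperfilter_of_finite hcon hs
  have hUge : ∀ N : ℕ, {k | N ≤ k} ∈ U := by
    intro N
    have h1 : {k : ℕ | k < N}ᶜ ∈ Filter.hyperfilter ℕ :=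
      (Set.finite_lt_nat N).compl_mem_hyperfilter
    have h2 : {k : ℕ | k < N}ᶜ = {k | N ≤ k} := by ext k; simp [not_lt]
    rw [h2] at h1
    exact h1
  have hne1 : bdist A f g + 1 ≠ ⊤ := ENNReal.add_ne_top.2 ⟨htop, ENNReal.one_ne_top⟩
  have hδ1 : ∀ k : ℕ, ((k + 1 : ℕ) : ℝ≥0∞)⁻¹ ≤ 1 := by
    intro k
    refine ENNReal.inv_le_one.2 ?_
    exact_mod_cast Nat.one_le_iff_ne_zero.2 (Nat.succ_ne_zero k)
  have hzex : ∀ i : ℕ, ∃ z : X, ∀ ε : ℝ, 0 < ε →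
      {k | dist (Sum.elim g (β k) (e k (Sum.inl i))) z < ε} ∈ U := by
    intro i
    refine exists_cluster (f i) ((bdist A f g + 1).toReal) _ (fun k => ?_) U
    have h1 : edist (f i) (Sum.elim g (β k) (e k (Sum.inl i))) ≤ bdist A f g + 1 := by
      refine le_trans ?_ (add_le_add_right (hδ1 k) _)
      exact hmatch k (Sum.inl i)
    rw [dist_comm, dist_edist]
    exact ENNReal.toReal_mono hne1 h1
  choose z hz using hzex
  have hwex : ∀ j : ℕ, ∃ w : X, ∀ ε : ℝ, 0 < ε →
      {k | dist (Sum.elim f (α k) ((e k).symm (Sum.inl j))) w < ε} ∈ U := by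
    intro j
    refine exists_cluster (g j) ((bdist A f g + 1).toReal) _ (fun k => ?_) U
    have h1 : edist (Sum.elim f (α k) ((e k).symm (Sum.inl j))) (g j)
        ≤ bdist A f g + 1 := by
      have h2 := hmatch k ((e k).symm (Sum.inl j))
      rw [Equiv.apply_symm_apply] at h2
      simpa using le_trans h2 (add_le_add_right (hδ1 k) _)
    rw [dist_edist]
    exact ENNReal.toReal_mono hne1 h1
  choose w hw using hwex
  set Jset : ℕ → ℕ → Set ℕ := fun i j => {k | e k (Sum.inl i) = Sum.inl j} with hJset
  set St : ℕ → Prop := fun i => ∃ j, Jset i j ∈ U with hStdef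
  set Tt : ℕ → Prop := fun j => ∃ i, Jset i j ∈ U with hTtdef
  have uni₁ : ∀ i j j', Jset i j ∈ U → Jset i j' ∈ U → j = j' := by
    intro i j j' h1 h2
    obtain ⟨k, hk⟩ := Ultrafilter.nonempty_of_mem (inter_mem h1 h2)
    have hk1 : e k (Sum.inl i) = Sum.inl j := hk.1
    have hk2 : e k (Sum.inl i) = Sum.inl j' := hk.2
    exact Sum.inl.inj (hk1.symm.trans hk2)
  have uni₂ : ∀ i i' j, Jset i j ∈ U → Jset i' j ∈ U → i = i' := by
    intro i i' j h1 h2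
    obtain ⟨k, hk⟩ := Ultrafilter.nonempty_of_mem (inter_mem h1 h2)
    have hk1 : e k (Sum.inl i) = Sum.inl j := hk.1
    have hk2 : e k (Sum.inl i') = Sum.inl j := hk.2
    exact Sum.inl.inj ((e k).injective (hk1.trans hk2.symm))
  set P : ℕ → ℕ := fun i => if h : St i then h.choose else 0 with hPdef
  have hP : ∀ i, St i → Jset i (P i) ∈ U := by
    intro i h
    have h1 : P i = h.choose := by simp [hPdef, dif_pos h]
    rw [h1]
    exact h.choose_spec
  set Qq : ℕ → ℕ := fun j => if h : Tt j then h.choose else 0 with hQdef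
  have hQ : ∀ j, Tt j → Jset (Qq j) j ∈ U := by
    intro j h
    have h1 : Qq j = h.choose := by simp [hQdef, dif_pos h]
    rw [h1]
    exact h.choose_spec
  have hPT : ∀ i, St i → Tt (P i) := fun i h => ⟨i, hP i h⟩
  have hQS : ∀ j, Tt j → St (Qq j) := fun j h => ⟨j, hQ j h⟩
  have hQP : ∀ i, St i → Qq (P i) = i := fun i h => uni₂ _ _ _ (hQ _ (hPT i h)) (hP i h)
  have hPQ : ∀ j, Tt j → P (Qq j) = j := fun j h => uni₁ _ _ _ (hP _ (hQS j h)) (hQ j h)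
  set z' : ℕ → X := fun i => if St i then a0 else z i with hz'def
  set w' : ℕ → X := fun j => if Tt j then a0 else w j with hw'def
  set ν : ℕ ≃ ℕ ⊕ ℕ := (Denumerable.eqv (ℕ ⊕ ℕ)).symm with hν
  set f' : ℕ → X := fun n => Sum.elim f w' (ν n) with hf'def
  set g' : ℕ → X := fun n => Sum.elim g z' (ν n) with hg'def
  set E : (ℕ ⊕ ℕ) ≃ (ℕ ⊕ ℕ) :=
    { toFun := Sum.elim (fun i => if St i then Sum.inl (P i) else Sum.inr i)
        (fun j => if Tt j then Sum.inr (Qq j) else Sum.inl j)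
      invFun := Sum.elim (fun j => if Tt j then Sum.inl (Qq j) else Sum.inr j)
        (fun i => if St i then Sum.inr (P i) else Sum.inl i)
      left_inv := by
        rintro (i | j)
        · by_cases h : St i
          · simp [h, hPT i h, hQP i h]
          · simp [h]
        · by_cases h : Tt j
          · simp [h, hQS j h, hPQ j h]
          · simp [h]
      right_inv := by
        rintro (j | i)
        · by_cases h : Tt j
          · simp [h, hQS j h, hPQ j h]
          · simp [h]
        · by_cases h : St i
          · simp [h, hPT i h, hQP i h]
          · simp [h] } with hEdef
  set eqv : ℕ ≃ ℕ := (ν.trans E).trans ν.symm with heqv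
  have hδsmall : ∀ ε : ℝ≥0∞, ε ≠ 0 → ∃ N : ℕ, ∀ k, N ≤ k → ((k + 1 : ℕ) : ℝ≥0∞)⁻¹ ≤ ε := by
    intro ε hε'
    obtain ⟨n, hn⟩ := ENNReal.exists_inv_nat_lt hε'
    refine ⟨n, fun k hk => le_trans ?_ hn.le⟩
    refine ENNReal.inv_le_inv.2 ?_
    exact_mod_cast Nat.le_succ_of_le hk
  have hhalf : ∀ ε : ℝ≥0, ENNReal.ofReal ((ε : ℝ) / 2) = (ε : ℝ≥0∞) / 2 := by
    intro ε
    rw [ENNReal.ofReal_div_of_pos (by norm_num), ENNReal.ofReal_coe_nnreal]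
    norm_num
  have hstable_cost : ∀ i, St i → edist (f i) (g (P i)) ≤ bdist A f g := by
    intro i h
    refine ENNReal.le_of_forall_pos_le_add fun ε hε' _ => ?_
    obtain ⟨N, hN⟩ := hδsmall ε (by exact_mod_cast hε'.ne')
    obtain ⟨k, hkmem, hklt⟩ := (hUinf _ (hP i h)).exists_gt N
    have heq : e k (Sum.inl i) = Sum.inl (P i) := hkmem
    have h1 := hmatch k (Sum.inl i)
    rw [heq] at h1
    have h2 : edist (f i) (g (P i)) ≤ bdist A f g + ((k + 1 : ℕ) : ℝ≥0∞)⁻¹ := by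
      simpa using h1
    exact le_trans h2 (add_le_add_right (hN k hklt.le) _)
  have hz_cost : ∀ i, edist (f i) (z i) ≤ bdist A f g := by
    intro i
    refine ENNReal.le_of_forall_pos_le_add fun ε hε' hb => ?_
    have hhalfpos : (0:ℝ) < (ε : ℝ) / 2 := div_pos (by exact_mod_cast hε') two_pos
    have hc : ((ε : ℝ≥0∞) / 2) ≠ 0 := by
      simp [ENNReal.div_eq_zero_iff, hε'.ne']
    obtain ⟨N, hN⟩ := hδsmall _ hc
    obtain ⟨k, hk⟩ := Ultrafilter.nonempty_of_mem (inter_mem (hz i _ hhalfpos) (hUge N))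
    have hk1 : dist (Sum.elim g (β k) (e k (Sum.inl i))) (z i) < (ε : ℝ) / 2 := hk.1
    have hk2 : N ≤ k := hk.2
    have h1 : edist (f i) (Sum.elim g (β k) (e k (Sum.inl i)))
        ≤ bdist A f g + (ε : ℝ≥0∞) / 2 :=
      le_trans (hmatch k (Sum.inl i)) (add_le_add_right (hN k hk2) _)
    have h2 : edist (Sum.elim g (β k) (e k (Sum.inl i))) (z i) ≤ (ε : ℝ≥0∞) / 2 := by
      rw [edist_dist, ← hhalf ε]
      exact ENNReal.ofReal_le_ofReal hk1.le
    calc edist (f i) (z i)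
        ≤ _ + _ := edist_triangle _ (Sum.elim g (β k) (e k (Sum.inl i))) _
      _ ≤ (bdist A f g + (ε : ℝ≥0∞) / 2) + (ε : ℝ≥0∞) / 2 := add_le_add h1 h2
      _ = bdist A f g + ε := by rw [add_assoc, ENNReal.add_halves]
  have hw_cost : ∀ j, edist (w j) (g j) ≤ bdist A f g := by
    intro j
    refine ENNReal.le_of_forall_pos_le_add fun ε hε' hb => ?_
    have hhalfpos : (0:ℝ) < (ε : ℝ) / 2 := div_pos (by exact_mod_cast hε') two_pos
    have hc : ((ε : ℝ≥0∞) / 2) ≠ 0 := by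
      simp [ENNReal.div_eq_zero_iff, hε'.ne']
    obtain ⟨N, hN⟩ := hδsmall _ hc
    obtain ⟨k, hk⟩ := Ultrafilter.nonempty_of_mem (inter_mem (hw j _ hhalfpos) (hUge N))
    have hk1 : dist (Sum.elim f (α k) ((e k).symm (Sum.inl j))) (w j) < (ε : ℝ) / 2 := hk.1
    have hk2 : N ≤ k := hk.2
    have h1 : edist (Sum.elim f (α k) ((e k).symm (Sum.inl j))) (g j)
        ≤ bdist A f g + (ε : ℝ≥0∞) / 2 := by
      have h3 := hmatch k ((e k).symm (Sum.inl j))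
      rw [Equiv.apply_symm_apply] at h3
      simpa using le_trans h3 (add_le_add_right (hN k hk2) _)
    have h2 : edist (w j) (Sum.elim f (α k) ((e k).symm (Sum.inl j))) ≤ (ε : ℝ≥0∞) / 2 := by
      rw [edist_comm, edist_dist, ← hhalf ε]
      exact ENNReal.ofReal_le_ofReal hk1.le
    calc edist (w j) (g j)
        ≤ _ + _ := edist_triangle _ (Sum.elim f (α k) ((e k).symm (Sum.inl j))) _
      _ ≤ (ε : ℝ≥0∞) / 2 + (bdist A f g + (ε : ℝ≥0∞) / 2) := add_le_add h2 h1
      _ = bdist A f g + ε := by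
        rw [add_comm ((ε : ℝ≥0∞) / 2) _, add_assoc, ENNReal.add_halves]
  have hsup : ∀ m : ℕ ⊕ ℕ, edist (Sum.elim f w' m) (Sum.elim g z' (E m)) ≤ bdist A f g := by
    rintro (i | j)
    · by_cases h : St i
      · have hEi : E (Sum.inl i) = Sum.inl (P i) := by simp [hEdef, h]
        rw [hEi]
        simpa using hstable_cost i h
      · have hEi : E (Sum.inl i) = Sum.inr i := by simp [hEdef, h]
        rw [hEi]
        have hzi : z' i = z i := by simp [hz'def, h]
        simpa [hzi] using hz_cost i
    · by_cases h : Tt j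
      · have hEj : E (Sum.inr j) = Sum.inr (Qq j) := by simp [hEdef, h]
        rw [hEj]
        have h1 : w' j = a0 := by simp [hw'def, h]
        have h2 : z' (Qq j) = a0 := by simp [hz'def, hQS j h]
        simp [h1, h2]
      · have hEj : E (Sum.inr j) = Sum.inl j := by simp [hEdef, h]
        rw [hEj]
        have h1 : w' j = w j := by simp [hw'def, h]
        simpa [h1] using hw_cost j
  have hsupr : (⨆ n : ℕ, edist (f' n) (g' (eqv n))) ≤ bdist A f g := by
    refine iSup_le fun n => ?_
    have h1 : g' (eqv n) = Sum.elim g z' (E (ν n)) := by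
      simp [hg'def, heqv, Equiv.apply_symm_apply]
    have h2 : f' n = Sum.elim f w' (ν n) := by simp [hf'def]
    rw [h1, h2]
    exact hsup (ν n)
  have hdichg : ∀ ε : ℝ, 0 < ε → ∀ i,
      (∃ a ∈ A, dist (z' i) a ≤ ε) ∨ {j | dist (g j) (z' i) ≤ ε}.Infinite := by
    intro ε hε' i
    by_cases h : St i
    · left
      refine ⟨a0, ha0, ?_⟩
      have h1 : z' i = a0 := by simp [hz'def, h]
      simp [h1, hε'.le]
    · have hzi : z' i = z i := by simp [hz'def, h]
      rw [hzi]
      by_contra hcon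
      push_neg at hcon
      obtain ⟨hnear, hfin⟩ := hcon
      have hsub : {k | dist (Sum.elim g (β k) (e k (Sum.inl i))) (z i) < ε} ⊆
          ⋃ j ∈ {j | dist (g j) (z i) ≤ ε}, Jset i j := by
        intro k hk
        simp only [Set.mem_setOf_eq] at hk
        rcases hek : e k (Sum.inl i) with j | m
        · rw [hek] at hk
          simp only [Sum.elim_inl] at hk
          exact Set.mem_biUnion (hk.le : dist (g j) (z i) ≤ ε) hek
        · exfalso
          rw [hek] at hk
          simp only [Sum.elim_inr] at hk
          have h3 := hnear (β k m) (hβ k m)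
          rw [dist_comm] at hk
          linarith
      have hUnion : (⋃ j ∈ {j | dist (g j) (z i) ≤ ε}, Jset i j) ∈ U :=
        mem_of_superset (hz i ε hε') hsub
      obtain ⟨j, hjmem, hjU⟩ := (Ultrafilter.finite_biUnion_mem_iff hfin).1 hUnion
      exact h ⟨j, hjU⟩
  have hdichf : ∀ ε : ℝ, 0 < ε → ∀ j,
      (∃ a ∈ A, dist (w' j) a ≤ ε) ∨ {i | dist (f i) (w' j) ≤ ε}.Infinite := by
    intro ε hε' j
    by_cases h : Tt j
    · left
      refine ⟨a0, ha0, ?_⟩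
      have h1 : w' j = a0 := by simp [hw'def, h]
      simp [h1, hε'.le]
    · have hwj : w' j = w j := by simp [hw'def, h]
      rw [hwj]
      by_contra hcon
      push_neg at hcon
      obtain ⟨hnear, hfin⟩ := hcon
      have hsub : {k | dist (Sum.elim f (α k) ((e k).symm (Sum.inl j))) (w j) < ε} ⊆
          ⋃ i ∈ {i | dist (f i) (w j) ≤ ε}, Jset i j := by
        intro k hk
        simp only [Set.mem_setOf_eq] at hk
        rcases hek : (e k).symm (Sum.inl j) with i | m
        · rw [hek] at hk
          simp only [Sum.elim_inl] at hk
          have hJ : e k (Sum.inl i) = Sum.inl j := by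
            rw [← hek, Equiv.apply_symm_apply]
          exact Set.mem_biUnion (hk.le : dist (f i) (w j) ≤ ε) hJ
        · exfalso
          rw [hek] at hk
          simp only [Sum.elim_inr] at hk
          have h3 := hnear (α k m) (hα k m)
          rw [dist_comm] at hk
          linarith
      have hUnion : (⋃ i ∈ {i | dist (f i) (w j) ≤ ε}, Jset i j) ∈ U :=
        mem_of_superset (hw j ε hε') hsub
      obtain ⟨i, himem, hiU⟩ := (Ultrafilter.finite_biUnion_mem_iff hfin).1 hUnion
      exact h ⟨i, hiU⟩
  have hgz : bdist A g g' = 0 := by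
    rw [hg'def]
    exact bdist_zero_absorb ha0 g z' ν hdichg
  have hfw : bdist A f f' = 0 := by
    rw [hf'def]
    exact bdist_zero_absorb ha0 f w' ν hdichf
  have hf'g' : bdist A f' g' ≤ ⨆ n : ℕ, edist (f' n) (g' (eqv n)) := by
    refine bdist_le_master f' g' (Equiv.refl _) (Equiv.refl _)
      (Sum.elim f' fun _ => a0) (Sum.elim g' fun _ => a0)
      (fun n => rfl) (fun _ => ha0) (fun n => rfl) (fun _ => ha0)
      (Equiv.sumCongr eqv (Equiv.refl ℕ)) ?_
    rintro (n | m)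
    · simpa using le_iSup (fun n => edist (f' n) (g' (eqv n))) n
    · simp
  have hge : bdist A f g ≤ ⨆ n : ℕ, edist (f' n) (g' (eqv n)) := by
    calc bdist A f g ≤ bdist A f f' + bdist A f' g := bdist_triangle f f' g
      _ ≤ bdist A f f' + (bdist A f' g' + bdist A g' g) :=
        add_le_add_right (bdist_triangle f' g' g) _
      _ = bdist A f' g' := by
        rw [hfw, bdist_symm g g', hgz]
        simp
      _ ≤ _ := hf'g'
  obtain ⟨hfseq, hfseqA, hfseqfin⟩ := hf
  obtain ⟨hgseq, hgseqA, hgseqfin⟩ := hg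
  have hdiagf' : IsDiagram A f' := by
    refine ⟨fun _ => a0, fun _ => ha0, ?_⟩
    have h1 : bdist A f' (fun _ => a0) ≤ bdist A f' f +
        (bdist A f hfseq + bdist A hfseq (fun _ => a0)) :=
      le_trans (bdist_triangle f' f (fun _ => a0))
        (add_le_add_right (bdist_triangle f hfseq (fun _ => a0)) _)
    rw [bdist_zero_of_mem hfseqA (fun _ => ha0), add_zero] at h1
    rw [bdist_symm f f', hfw, zero_add] at h1
    exact ne_top_of_le_ne_top hfseqfin h1
  have hdiagg' : IsDiagram A g' := by
    refine ⟨fun _ => a0, fun _ => ha0, ?_⟩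
    have h1 : bdist A g' (fun _ => a0) ≤ bdist A g' g +
        (bdist A g hgseq + bdist A hgseq (fun _ => a0)) :=
      le_trans (bdist_triangle g' g (fun _ => a0))
        (add_le_add_right (bdist_triangle g hgseq (fun _ => a0)) _)
    rw [bdist_zero_of_mem hgseqA (fun _ => ha0), add_zero] at h1
    rw [bdist_symm g g', hgz, zero_add] at h1
    exact ne_top_of_le_ne_top hgseqfin h1
  exact ⟨f', g', hdiagf', hdiagg', hfw, hgz, eqv, le_antisymm hge hsupr⟩
end

section
/- Let X be a proper metric space and A ⊆ X a nonempty closed subset. Then any geodesic in the quotient metric space X/A with the collapsed point A as an endpoint can be lifted to a geodesic in X: if η : [0,1] → X/A is a constant-speed geodesic with η(0) = A, there exists a geodesicη' : [0,1] → X with η'(t) = η(t) for t > 0 (viewing points of X\A in X/A as points of X) and η'(0) ∈ A. -/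
open scoped ENNReal
open Filter Metric Set

/-- In a proper metric space `X` with nonempty closed `A ⊆ X`, any constant-speed geodesic
in the quotient `X/A` starting at the collapsed point `A` lifts to a constant-speed geodesic
in `X` starting at a point of `A` and projecting to the original geodesic. -/
theorem stmt_14 {X : Type*} [MetricSpace X] [ProperSpace X] (A : Set X)
    (hA : A.Nonempty) (hAcl : IsClosed A)
    (η : ℝ → X) (h0 : η 0 ∈ A)
    (hgeo : ∀ s t : ℝ, s ∈ Set.Icc (0:ℝ) 1 → t ∈ Set.Icc (0:ℝ) 1 →
      qdist A (η s) (η t) = |s - t| * qdist A (η 0) (η 1)) :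
    ∃ η' : ℝ → X, η' 0 ∈ A ∧
      (∀ t : ℝ, 0 < t → t ≤ 1 → (η' t = η t ∨ (η' t ∈ A ∧ η t ∈ A))) ∧
      ∀ s t : ℝ, s ∈ Set.Icc (0:ℝ) 1 → t ∈ Set.Icc (0:ℝ) 1 →
        dist (η' s) (η' t) = |s - t| * qdist A (η 0) (η 1) := by
  set L := qdist A (η 0) (η 1) with hLdef
  -- distance to A along the geodesic
  have hinf : ∀ t : ℝ, t ∈ Set.Icc (0:ℝ) 1 → Metric.infDist (η t) A = t * L := by
    intro t ht
    have h := hgeo 0 t ⟨le_refl 0, zero_le_one⟩ ht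
    rw [zero_sub, abs_neg, abs_of_nonneg ht.1] at h
    have h00 : Metric.infDist (η 0) A = 0 := Metric.infDist_zero_of_mem h0
    unfold qdist at h
    rw [h00, zero_add] at h
    have hle : Metric.infDist (η t) A ≤ dist (η 0) (η t) := by
      rw [dist_comm]; exact Metric.infDist_le_dist_of_mem h0
    rwa [min_eq_right hle] at h
  have hLnn : 0 ≤ L := by
    have := hinf 1 ⟨zero_le_one, le_refl 1⟩
    rw [one_mul] at this
    rw [← this]; exact Metric.infDist_nonneg
  rcases hLnn.lt_or_eq with hLpos | hLzero
  · -- L > 0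
    have hd : ∀ s t : ℝ, 0 < s → s ≤ 1 → 0 < t → t ≤ 1 →
        dist (η s) (η t) = |s - t| * L := by
      intro s t hs hs1 ht ht1
      have h := hgeo s t ⟨hs.le, hs1⟩ ⟨ht.le, ht1⟩
      unfold qdist at h
      rw [hinf s ⟨hs.le, hs1⟩, hinf t ⟨ht.le, ht1⟩] at h
      have habs : |s - t| < s + t := abs_sub_lt_iff.mpr ⟨by linarith, by linarith⟩
      have hlt : |s - t| * L < s * L + t * L := by nlinarith
      rcases le_total (dist (η s) (η t)) (s * L + t * L) with hc | hc
      · rwa [min_eq_left hc] at h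
      · rw [min_eq_right hc] at h; linarith
    set x : ℕ → X := fun n => η (1 / ((n : ℝ) + 1)) with hxdef
    have hu : ∀ n : ℕ, 0 < 1 / ((n : ℝ) + 1) ∧ 1 / ((n : ℝ) + 1) ≤ 1 := by
      intro n
      constructor
      · positivity
      · rw [div_le_one (by positivity)]; linarith [Nat.cast_nonneg (α := ℝ) n]
    have hmono : ∀ N n : ℕ, N ≤ n → 1 / ((n : ℝ) + 1) ≤ 1 / ((N : ℝ) + 1) := by
      intro N n h
      apply one_div_le_one_div_of_le (by positivity)
      have : (N : ℝ) ≤ n := Nat.cast_le.mpr h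
      linarith
    have htend0 : Filter.Tendsto (fun n : ℕ => 1 / ((n : ℝ) + 1)) Filter.atTop (nhds 0) :=
      tendsto_one_div_add_atTop_nhds_zero_nat
    have hcau : CauchySeq x := by
      apply cauchySeq_of_le_tendsto_0 (fun N : ℕ => 1 / ((N : ℝ) + 1) * L)
      · intro n m N hn hm
        rw [hxdef]
        rw [hd _ _ (hu n).1 (hu n).2 (hu m).1 (hu m).2]
        apply mul_le_mul_of_nonneg_right _ hLnn
        rw [abs_sub_le_iff]
        constructor
        · have := hmono N n hn
          have := (hu m).1
          linarith
        · have := hmono N m hm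
          have := (hu n).1
          linarith
      · have := htend0.mul_const L
        simpa using this
    obtain ⟨a, ha⟩ := cauchySeq_tendsto_of_complete hcau
    have haA : a ∈ A := by
      have h1 : Filter.Tendsto (fun n : ℕ => Metric.infDist (x n) A)
          Filter.atTop (nhds (Metric.infDist a A)) :=
        ((Metric.continuous_infDist_pt A).tendsto a).comp ha
      have h2 : (fun n : ℕ => Metric.infDist (x n) A)
          = fun n : ℕ => 1 / ((n : ℝ) + 1) * L := by
        funext n
        exact hinf _ ⟨(hu n).1.le, (hu n).2⟩
      rw [h2] at h1
      have h3 : Metric.infDist a A = 0 := by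
        have := htend0.mul_const L
        rw [zero_mul] at this
        exact tendsto_nhds_unique h1 this
      exact (hAcl.mem_iff_infDist_zero hA).mpr h3
    have hda : ∀ t : ℝ, 0 < t → t ≤ 1 → dist a (η t) = t * L := by
      intro t ht ht1
      have h1 : Filter.Tendsto (fun n : ℕ => dist (x n) (η t))
          Filter.atTop (nhds (dist a (η t))) := ha.dist tendsto_const_nhds
      have h2 : (fun n : ℕ => dist (x n) (η t))
          = fun n : ℕ => |1 / ((n : ℝ) + 1) - t| * L := by
        funext n
        exact hd _ _ (hu n).1 (hu n).2 ht ht1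
      rw [h2] at h1
      have h3 : Filter.Tendsto (fun n : ℕ => |1 / ((n : ℝ) + 1) - t| * L)
          Filter.atTop (nhds (t * L)) := by
        have := ((htend0.sub_const t).abs).mul_const L
        rw [zero_sub, abs_neg, abs_of_pos ht] at this
        exact this
      exact tendsto_nhds_unique h1 h3
    refine ⟨fun t => if 0 < t then η t else a, by simp [haA], ?_, ?_⟩
    · intro t ht ht1
      left; simp [ht]
    · intro s t hs ht
      by_cases hs0 : 0 < s <;> by_cases ht0 : 0 < t
      · simp only [if_pos hs0, if_pos ht0]
        exact hd s t hs0 hs.2 ht0 ht.2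
      · have ht' : t = 0 := le_antisymm (not_lt.mp ht0) ht.1
        subst ht'
        simp only [if_pos hs0, if_neg ht0]
        rw [dist_comm, hda s hs0 hs.2, sub_zero, abs_of_pos hs0]
      · have hs' : s = 0 := le_antisymm (not_lt.mp hs0) hs.1
        subst hs'
        simp only [if_pos ht0, if_neg hs0]
        rw [hda t ht0 ht.2, zero_sub, abs_neg, abs_of_pos ht0]
      · have hs' : s = 0 := le_antisymm (not_lt.mp hs0) hs.1
        have ht' : t = 0 := le_antisymm (not_lt.mp ht0) ht.1
        subst hs'; subst ht'
        simp
  · -- L = 0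
    refine ⟨fun _ => η 0, h0, ?_, ?_⟩
    · intro t ht ht1
      right
      refine ⟨h0, ?_⟩
      have := hinf t ⟨ht.le, ht1⟩
      rw [← hLzero, mul_zero] at this
      exact (hAcl.mem_iff_infDist_zero hA).mpr this
    · intro s t hs ht
      simp [← hLzero]
end
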